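/- arXiv:1208.3507 — 4 statements merged into one kernel-verified Lean document; each statement's English description precedes it below -/
import Mathlib

section
/- For every p in (1,∞), the integral ∫_{-1}^{1} (1-s^p)^{-1/p} ds equals 2π/(p·sin(π/p)). -/
open MeasureTheory Set Real intervalIntegral

/-- Integrability of `u^a * (1-u)^b` on `[0, 1/2]` for negative exponents `> -1`. -/
lemma aux_half (a b : ℝ) (ha : -1 < a) (ha0 : a ≤ 0) (hb0 : b ≤ 0) :
    IntervalIntegrable (fun u : ℝ => u ^ a * (1 - u) ^ b) volume 0 (1/2) := by
  have hmaj : IntervalIntegrable (fun u : ℝ => (1/2 : ℝ) ^ b * u ^ a) volume 0 (1/2) :=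
    (intervalIntegral.intervalIntegrable_rpow' ha).const_mul _
  refine hmaj.mono_fun ?_ ?_
  · have hcont : ContinuousOn (fun u : ℝ => u ^ a * (1 - u) ^ b) (Ioc 0 (1/2)) := by
      apply ContinuousOn.mul
      · exact ContinuousOn.rpow_const continuousOn_id (fun x hx => Or.inl hx.1.ne')
      · have hc1 : ContinuousOn (fun u : ℝ => 1 - u) (Ioc 0 (1/2)) :=
          (continuous_const.sub continuous_id).continuousOn
        exact hc1.rpow_const (fun x hx => Or.inl (by intro hc; nlinarith [hx.2]))
    rw [uIoc_of_le (by norm_num : (0:ℝ) ≤ 1/2)]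
    exact hcont.aestronglyMeasurable measurableSet_Ioc
  · rw [uIoc_of_le (by norm_num : (0:ℝ) ≤ 1/2)]
    filter_upwards [ae_restrict_mem measurableSet_Ioc] with u hu
    have hu0 : 0 < u := hu.1
    have hu2 : u ≤ 1/2 := hu.2
    have h1u : (1:ℝ)/2 ≤ 1 - u := by linarith
    have hb' : (1 - u) ^ b ≤ (1/2 : ℝ) ^ b :=
      Real.rpow_le_rpow_of_nonpos (by norm_num) h1u hb0
    have h1 : (0:ℝ) ≤ u ^ a := (Real.rpow_pos_of_pos hu0 a).le
    have h2 : (0:ℝ) ≤ (1 - u) ^ b := Real.rpow_nonneg (by linarith) b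
    rw [Real.norm_eq_abs, Real.norm_eq_abs, abs_of_nonneg (mul_nonneg h1 h2),
      abs_of_nonneg (mul_nonneg (by positivity) h1)]
    calc u ^ a * (1-u) ^ b ≤ u ^ a * (1/2:ℝ) ^ b := by
          exact mul_le_mul_of_nonneg_left hb' h1
      _ = (1/2:ℝ) ^ b * u ^ a := mul_comm _ _

/-- Integrability of `u^a * (1-u)^b` on `[0, 1]` for negative exponents `> -1`. -/
lemma aux_beta_integrable (a b : ℝ) (ha : -1 < a) (ha0 : a ≤ 0) (hb : -1 < b) (hb0 : b ≤ 0) :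
    IntervalIntegrable (fun u : ℝ => u ^ a * (1 - u) ^ b) volume 0 1 := by
  have h1 := aux_half a b ha ha0 hb0
  have h2 := (aux_half b a hb hb0 ha0).comp_sub_left 1
  norm_num at h2
  have h2' : IntervalIntegrable (fun u : ℝ => u ^ a * (1 - u) ^ b) volume (1/2) 1 := by
    have heq : (fun x : ℝ => (1 - x) ^ b * x ^ a) = fun u : ℝ => u ^ a * (1 - u) ^ b := by
      funext u; exact mul_comm _ _
    rw [heq] at h2
    exact h2.symm
  exact h1.trans h2'

/-- The real Beta integral via the complex one. -/
lemma aux_real_beta (a : ℝ) (ha : 0 < a) (ha1 : a < 1) :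
    ∫ x in (0:ℝ)..1, x ^ (a - 1) * (1 - x) ^ (-a) = Real.pi / Real.sin (Real.pi * a) := by
  have hb : Complex.betaIntegral a (1 - a) = ((Real.pi / Real.sin (Real.pi * a) : ℝ) : ℂ) := by
    have h1 := Complex.Gamma_mul_Gamma_eq_betaIntegral
      (s := (a : ℂ)) (t := 1 - (a : ℂ)) (by simpa using ha) (by simp; linarith)
    rw [add_sub_cancel, Complex.Gamma_one, one_mul] at h1
    rw [← h1, Complex.Gamma_mul_Gamma_one_sub]
    push_cast [Complex.ofReal_sin]
    rfl
  have key : ((∫ x in (0:ℝ)..1, x ^ (a - 1) * (1 - x) ^ (-a) : ℝ) : ℂ)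
      = Complex.betaIntegral a (1 - a) := by
    rw [Complex.betaIntegral, ← intervalIntegral.integral_ofReal,
      intervalIntegral.integral_of_le zero_le_one, intervalIntegral.integral_of_le zero_le_one]
    refine setIntegral_congr_fun measurableSet_Ioc (fun x hx => ?_)
    have hx0 : (0:ℝ) ≤ x := hx.1.le
    have hx1 : (0:ℝ) ≤ 1 - x := by linarith [hx.2]
    push_cast
    rw [Complex.ofReal_cpow hx0, Complex.ofReal_cpow hx1]
    push_cast
    ring_nf
  rw [hb] at key
  exact_mod_cast key

/-- For every p ∈ (1,∞), ∫_{-1}^{1} (1-|s|^p)^{-1/p} ds = 2π/(p·sin(π/p)).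
This value is the generalized half-period π_p. -/
theorem stmt0 (p : ℝ) (hp : 1 < p) :
    (∫ s in (-1:ℝ)..1, (1 - |s| ^ p) ^ (-1/p)) =
      2 * Real.pi / (p * Real.sin (Real.pi / p)) := by
  have hp0 : (0:ℝ) < p := by linarith
  have hp0' : p ≠ 0 := hp0.ne'
  have hpa : (0:ℝ) < 1/p := by positivity
  have hpa1 : 1/p < 1 := by rw [div_lt_one hp0]; exact hp
  set h : ℝ → ℝ := fun s => (1 - |s| ^ p) ^ (-1/p) with hh
  -- integrability of h on [0,1]
  have hmaj : IntervalIntegrable (fun s : ℝ => (1 - s) ^ (-(1/p))) volume 0 1 := by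
    have := (intervalIntegral.intervalIntegrable_rpow'
      (r := -(1/p)) (by linarith) (a := 0) (b := 1)).comp_sub_left 1
    simp only [sub_zero, sub_self] at this
    exact this.symm
  have hsm : AEStronglyMeasurable h (volume.restrict (Ioc (0:ℝ) 1)) := by
    have hcont : ContinuousOn h (Ioo (0:ℝ) 1) := by
      apply ContinuousOn.rpow_const
      · exact continuousOn_const.sub ((continuous_abs.continuousOn).rpow_const
          (fun x hx => Or.inr hp0.le))
      · intro x hx
        left
        have : |x| < 1 := by rw [abs_lt]; exact ⟨by linarith [hx.1], hx.2⟩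
        have : |x| ^ p < 1 := Real.rpow_lt_one (abs_nonneg x) this hp0
        intro hc; nlinarith
    have h1 : AEStronglyMeasurable h (volume.restrict (Ioo (0:ℝ) 1)) :=
      hcont.aestronglyMeasurable measurableSet_Ioo
    rwa [Measure.restrict_congr_set Ioo_ae_eq_Ioc] at h1
  have hbound : ∀ s ∈ Ioc (0:ℝ) 1, ‖h s‖ ≤ ‖(1 - s) ^ (-(1/p))‖ := by
    intro s hs
    have hs0 : 0 < s := hs.1
    have hs1 : s ≤ 1 := hs.2
    have habs : |s| = s := abs_of_pos hs0
    have hsp : s ^ p ≤ s := by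
      calc s ^ p ≤ s ^ (1:ℝ) := Real.rpow_le_rpow_of_exponent_ge hs0 hs1 (by linarith)
        _ = s := Real.rpow_one s
    have hsp1 : s ^ p ≤ 1 := hsp.trans hs1
    have h1 : (0:ℝ) ≤ 1 - s ^ p := by linarith
    have hne : -(1/p) ≠ 0 := neg_ne_zero.mpr (by positivity)
    simp only [hh, Real.norm_eq_abs, habs, neg_div, one_div] at *
    rw [abs_of_nonneg (Real.rpow_nonneg h1 _),
      abs_of_nonneg (Real.rpow_nonneg (by linarith : (0:ℝ) ≤ 1 - s) _)]
    rcases eq_or_lt_of_le hs1 with rfl | hs1'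
    · simp [Real.one_rpow, Real.zero_rpow (show -p⁻¹ ≠ 0 by simpa using hne)]
    · have h2 : 0 < 1 - s := by linarith
      have h3 : 1 - s ≤ 1 - s ^ p := by linarith
      exact Real.rpow_le_rpow_of_nonpos h2 h3 (neg_nonpos.mpr (by positivity))
  have hInt01 : IntervalIntegrable h volume 0 1 := by
    refine hmaj.mono_fun ?_ ?_
    · rwa [uIoc_of_le zero_le_one]
    · rw [uIoc_of_le zero_le_one]
      filter_upwards [ae_restrict_mem measurableSet_Ioc] with s hs using hbound s hs
  have hIntneg : IntervalIntegrable h volume (-1) 0 := by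
    have := (IntervalIntegrable.iff_comp_neg (by simp)).mp hInt01
    have heq : (fun x : ℝ => h (-x)) = h := by funext x; simp [hh, abs_neg]
    rw [heq] at this
    simpa using this.symm
  -- split and use evenness
  have hsplit : (∫ s in (-1:ℝ)..1, h s) = (∫ s in (-1:ℝ)..0, h s) + ∫ s in (0:ℝ)..1, h s :=
    (intervalIntegral.integral_add_adjacent_intervals hIntneg hInt01).symm
  have heven : (∫ s in (-1:ℝ)..0, h s) = ∫ s in (0:ℝ)..1, h s := by
    have := intervalIntegral.integral_comp_neg (a := 0) (b := 1) h
    have heq : (fun x : ℝ => h (-x)) = h := by funext x; simp [hh, abs_neg]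
    rw [heq] at this
    simp only [neg_zero] at this
    exact this.symm
  -- change of variables on (0,1)
  have himg : (fun u : ℝ => u ^ (1/p)) '' Ioo 0 1 = Ioo (0:ℝ) 1 := by
    ext y
    constructor
    · rintro ⟨x, ⟨hx0, hx1⟩, rfl⟩
      exact ⟨Real.rpow_pos_of_pos hx0 _, Real.rpow_lt_one hx0.le hx1 (by positivity)⟩
    · rintro ⟨hy0, hy1⟩
      refine ⟨y ^ p, ⟨Real.rpow_pos_of_pos hy0 _, Real.rpow_lt_one hy0.le hy1 hp0⟩, ?_⟩
      show (y ^ p) ^ (1/p) = y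
      rw [← Real.rpow_mul hy0.le, mul_one_div_cancel hp0', Real.rpow_one]
  have hderiv : ∀ u ∈ Ioo (0:ℝ) 1, HasDerivWithinAt (fun u : ℝ => u ^ (1/p))
      (1/p * u ^ (1/p - 1)) (Ioo (0:ℝ) 1) u := fun u hu =>
    (Real.hasDerivAt_rpow_const (Or.inl hu.1.ne')).hasDerivWithinAt
  have hinj : InjOn (fun u : ℝ => u ^ (1/p)) (Ioo (0:ℝ) 1) := by
    intro x hx y hy hxy
    have hxy' : x ^ (1/p) = y ^ (1/p) := hxy
    have : (x ^ (1/p)) ^ p = (y ^ (1/p)) ^ p := by rw [hxy']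
    rwa [← Real.rpow_mul hx.1.le, ← Real.rpow_mul hy.1.le, one_div_mul_cancel hp0',
      Real.rpow_one, Real.rpow_one] at this
  have hchange := integral_image_eq_integral_abs_deriv_smul measurableSet_Ioo hderiv hinj
    (fun s => (1 - s ^ p) ^ (-1/p))
  rw [himg] at hchange
  have hrhs : (∫ u in Ioo (0:ℝ) 1, |1/p * u ^ (1/p - 1)| • (1 - (u ^ (1/p)) ^ p) ^ (-1/p))
      = ∫ u in Ioo (0:ℝ) 1, (1/p) * (u ^ (1/p - 1) * (1 - u) ^ (-(1/p))) := by
    refine setIntegral_congr_fun measurableSet_Ioo (fun u hu => ?_)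
    have hu0 : 0 < u := hu.1
    have hupos : 0 < u ^ (1/p - 1) := Real.rpow_pos_of_pos hu0 _
    have hup : (u ^ (1/p)) ^ p = u := by
      rw [← Real.rpow_mul hu0.le, one_div_mul_cancel hp0', Real.rpow_one]
    simp only [smul_eq_mul, hup]
    rw [abs_of_nonneg (by positivity)]
    rw [neg_div]
    ring
  -- on (0,1), h agrees with (1 - s^p)^(-1/p)
  have hIoo : (∫ s in (0:ℝ)..1, h s) = ∫ s in Ioo (0:ℝ) 1, (1 - s ^ p) ^ (-1/p) := by
    rw [intervalIntegral.integral_of_le zero_le_one, integral_Ioc_eq_integral_Ioo]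
    refine setIntegral_congr_fun measurableSet_Ioo (fun s hs => ?_)
    simp [hh, abs_of_pos hs.1]
  -- beta integral value
  have hbeta : (∫ u in Ioo (0:ℝ) 1, u ^ (1/p - 1) * (1 - u) ^ (-(1/p)))
      = Real.pi / Real.sin (Real.pi * (1/p)) := by
    rw [← integral_Ioc_eq_integral_Ioo, ← intervalIntegral.integral_of_le zero_le_one]
    exact aux_real_beta (1/p) hpa hpa1
  have hsin : Real.sin (Real.pi / p) ≠ 0 := by
    apply ne_of_gt
    apply Real.sin_pos_of_pos_of_lt_pi
    · positivity
    · rw [div_lt_iff₀ hp0]; nlinarith [Real.pi_pos]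
  have h01 : (∫ s in (0:ℝ)..1, h s) = Real.pi / (p * Real.sin (Real.pi / p)) := by
    rw [hIoo, hchange, hrhs, MeasureTheory.integral_const_mul, hbeta, mul_one_div]
    field_simp
  rw [hsplit, heven, h01]
  field_simp
  ring
end

section
/- Let w be a C¹ solution of d/dt(w'^{(p-1)}) - T·w'^{(p-1)} + λ·w^{(p-1)} = 0 on an interval, with (w, w') never both zero. Define α = (λ/(p-1))^{1/p}, e = (|w'|^p + α^p|w|^p)^{1/p} > 0, and let φ satisfy α·w = e·sin_p(φ) and w' = e·cos_p(φ). Then φ satisfies the first-order ODE φ' = α - (T/(p-1))·cos_p^{(p-1)}(φ)·sin_p(φ), and e satisfies (log e)' = (T/(p-1))·cos_p^p(φ). -/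
open Real Set Filter MeasureTheory
open Topology

/-- The signed power `x^{(q)} := |x|^{q-?}`; here `spow x q = |x|^q · sign x`,
so that `x^{(p-1)} = |x|^{p-2}·x = spow x (p-1)`. -/
noncomputable def spow (x q : ℝ) : ℝ := Real.sign x * |x| ^ q

/-- The generalized half-period `π_p = ∫_{-1}^1 (1-|s|^p)^{-1/p} ds`. -/
noncomputable def pip (p : ℝ) : ℝ := ∫ s in (-1:ℝ)..1, (1 - |s| ^ p) ^ (-1/p)

/-- `sinp` and `cosp` are the generalized p-trigonometric functions:
on `[-π_p/2, π_p/2]` the function `sinp` is defined implicitly by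
`t = ∫_0^{sinp t} (1-|s|^p)^{-1/p} ds`, it satisfies the reflection rule
`sinp t = sinp (π_p - t)` on `[π_p/2, 3π_p/2]`, is `2π_p`-periodic, and
`cosp` is its derivative. -/
def IsPTrig (p : ℝ) (sinp cosp : ℝ → ℝ) : Prop :=
  (∀ t ∈ Set.Icc (-(pip p)/2) (pip p/2),
      t = ∫ s in (0:ℝ)..(sinp t), (1 - |s| ^ p) ^ (-1/p)) ∧
  (∀ t ∈ Set.Icc (pip p/2) (3 * pip p/2), sinp t = sinp (pip p - t)) ∧
  (∀ t, sinp (t + 2 * pip p) = sinp t) ∧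
  (∀ t, HasDerivAt sinp (cosp t) t)

lemma spow_zero (q : ℝ) : spow 0 q = 0 := by simp [spow]

lemma spow_one (x : ℝ) : spow x 1 = x := by
  rcases lt_trichotomy x 0 with h | h | h
  · simp [spow, Real.sign_of_neg h, abs_of_neg h]
  · simp [h, spow]
  · simp [spow, Real.sign_of_pos h, abs_of_pos h]

lemma spow_ne_zero {x : ℝ} (q : ℝ) (hx : x ≠ 0) : spow x q ≠ 0 := by
  have h1 : |x| ^ q ≠ 0 := (Real.rpow_pos_of_pos (abs_pos.2 hx) q).ne'
  rcases lt_trichotomy x 0 with h | h | h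
  · simp [spow, Real.sign_of_neg h, h1]
  · exact absurd h hx
  · simp [spow, Real.sign_of_pos h, h1]

lemma abs_spow {q : ℝ} (hq : 0 < q) (x : ℝ) : |spow x q| = |x| ^ q := by
  rcases lt_trichotomy x 0 with h | h | h
  · simp [spow, Real.sign_of_neg h, abs_of_pos (Real.rpow_pos_of_pos (abs_pos.2 h.ne) q)]
  · simp [h, spow, Real.zero_rpow hq.ne']
  · simp [spow, Real.sign_of_pos h, abs_of_pos (Real.rpow_pos_of_pos (abs_pos.2 h.ne') q)]

lemma spow_spow {q : ℝ} (hq : 0 < q) (x r : ℝ) : spow (spow x q) r = spow x (q * r) := by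
  rcases eq_or_ne x 0 with h | h
  · simp [h, spow_zero]
  · have hax : 0 < |x| := abs_pos.2 h
    have h1 : Real.sign (spow x q) = Real.sign x := by
      rcases lt_trichotomy x 0 with hx | hx | hx
      · have : spow x q < 0 := by
          simp only [spow, Real.sign_of_neg hx]
          nlinarith [Real.rpow_pos_of_pos hax q]
        rw [Real.sign_of_neg this, Real.sign_of_neg hx]
      · exact absurd hx h
      · have : 0 < spow x q := by
          simp only [spow, Real.sign_of_pos hx]
          nlinarith [Real.rpow_pos_of_pos hax q]
        rw [Real.sign_of_pos this, Real.sign_of_pos hx]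
    calc spow (spow x q) r = Real.sign (spow x q) * |spow x q| ^ r := rfl
      _ = Real.sign x * (|x| ^ q) ^ r := by rw [h1, abs_spow hq]
      _ = Real.sign x * |x| ^ (q * r) := by rw [← Real.rpow_mul (abs_nonneg x)]

lemma mul_spow_self {q : ℝ} (hq : 0 < q) (x : ℝ) : x * spow x q = |x| ^ (q + 1) := by
  rcases eq_or_ne x 0 with h | h
  · simp [h, spow_zero, Real.zero_rpow (by positivity : q + 1 ≠ 0)]
  · have hax : 0 < |x| := abs_pos.2 h
    have hsx : x * Real.sign x = |x| := by
      rcases lt_trichotomy x 0 with hx | hx | hx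
      · simp [Real.sign_of_neg hx, abs_of_neg hx]
      · exact absurd hx h
      · simp [Real.sign_of_pos hx, abs_of_pos hx]
    calc x * spow x q = (x * Real.sign x) * |x| ^ q := by rw [spow]; ring
      _ = |x| ^ (1:ℝ) * |x| ^ q := by rw [hsx, Real.rpow_one]
      _ = |x| ^ (q + 1) := by rw [← Real.rpow_add hax]; ring_nf

lemma spow_pos_mul {a : ℝ} (ha : 0 < a) (b q : ℝ) : spow (a * b) q = a ^ q * spow b q := by
  rcases lt_trichotomy b 0 with hb | hb | hb
  · have : a * b < 0 := mul_neg_of_pos_of_neg ha hb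
    simp only [spow, Real.sign_of_neg this, Real.sign_of_neg hb, abs_mul, abs_of_pos ha,
      Real.mul_rpow ha.le (abs_nonneg b)]
    ring
  · simp [hb, spow_zero]
  · have : 0 < a * b := mul_pos ha hb
    simp only [spow, Real.sign_of_pos this, Real.sign_of_pos hb, abs_mul, abs_of_pos ha,
      Real.mul_rpow ha.le (abs_nonneg b)]
    ring

lemma hasDerivAt_abs_rpow' {q : ℝ} (hq : 1 < q) (x : ℝ) :
    HasDerivAt (fun y : ℝ => |y| ^ q) (q * spow x (q - 1)) x := by
  have h := hasDerivAt_abs_rpow x hq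
  refine h.congr_deriv ?_
  rcases eq_or_ne x 0 with hx | hx
  · simp [hx, spow_zero]
  · have hax : 0 < |x| := abs_pos.2 hx
    have : |x| ^ (q - 2) * x = spow x (q - 1) := by
      rcases lt_trichotomy x 0 with h' | h' | h'
      · rw [spow, Real.sign_of_neg h', abs_of_neg h']
        have h2 : (-x) ^ (q - 2) * (-x) = (-x) ^ (q - 1) := by
          rw [← Real.rpow_add_one (by linarith : (-x) ≠ 0) (q-2),
            show q - 2 + 1 = q - 1 by ring]
        linear_combination -h2
      · exact absurd h' hx
      · rw [spow, Real.sign_of_pos h', abs_of_pos h']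
        have h2 : x ^ (q - 2) * x = x ^ (q - 1) := by
          rw [← Real.rpow_add_one hx (q-2), show q - 2 + 1 = q - 1 by ring]
        linear_combination h2
    rw [← this]; ring

lemma continuousAt_abs_rpow {r : ℝ} (hr : 0 < r) (x : ℝ) :
    ContinuousAt (fun y : ℝ => |y| ^ r) x :=
  (Real.continuousAt_rpow_const |x| r (Or.inr hr.le)).comp continuous_abs.continuousAt

lemma continuous_spow {r : ℝ} (hr : 0 < r) : Continuous fun x => spow x r := by
  rw [continuous_iff_continuousAt]
  intro x
  rcases lt_trichotomy x 0 with hx | hx | hx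
  · refine ContinuousAt.congr ((continuousAt_abs_rpow hr x).neg) ?_
    filter_upwards [eventually_lt_nhds hx] with y hy
    rw [spow, Real.sign_of_neg hy, Pi.neg_apply]; ring
  · subst hx
    have h0 : spow 0 r = 0 := spow_zero r
    unfold ContinuousAt
    simp only [h0]
    have htd : Tendsto (fun y : ℝ => |y| ^ r) (𝓝 0) (𝓝 0) := by
      have := (continuousAt_abs_rpow hr 0).tendsto
      simpa [Real.zero_rpow hr.ne'] using this
    exact squeeze_zero_norm (fun y => le_of_eq (by rw [Real.norm_eq_abs, abs_spow hr])) htd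
  · refine ContinuousAt.congr (continuousAt_abs_rpow hr x) ?_
    filter_upwards [eventually_gt_nhds hx] with y hy
    rw [spow, Real.sign_of_pos hy]; ring

/-- the Prüfer transformation. If `w` solves
`(w'^{(p-1)})' - T·w'^{(p-1)} + λ·w^{(p-1)} = 0` on an interval with `(w,w')`
never both zero, and `e = (|w'|^p + α^p|w|^p)^{1/p}`, `α·w = e·sin_p φ`,
`w' = e·cos_p φ` with `α = (λ/(p-1))^{1/p}`, then
`φ' = α - (T/(p-1))·cos_p^{(p-1)}(φ)·sin_p(φ)` and `(log e)' = e'/e = (T/(p-1))·|cos_p φ|^p`. -/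
theorem stmt4 (p lam : ℝ) (hp : 1 < p) (hl : 0 < lam)
    (sinp cosp : ℝ → ℝ) (htrig : IsPTrig p sinp cosp)
    (I : Set ℝ) (hIopen : IsOpen I)
    (T : ℝ → ℝ) (hT : ContDiffOn ℝ 1 T I)
    (w w' v : ℝ → ℝ)
    (hw : ∀ t ∈ I, HasDerivAt w (w' t) t)
    (hv : ∀ t ∈ I, HasDerivAt (fun s => spow (w' s) (p-1)) (v t) t)
    (hode : ∀ t ∈ I, v t - T t * spow (w' t) (p-1) + lam * spow (w t) (p-1) = 0)
    (hnz : ∀ t ∈ I, w t ≠ 0 ∨ w' t ≠ 0)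
    (α : ℝ) (hα : α = (lam / (p-1)) ^ (1/p))
    (e φ e' φ' : ℝ → ℝ)
    (he : ∀ t ∈ I, e t = (|w' t| ^ p + α ^ p * |w t| ^ p) ^ (1/p))
    (hpolar : ∀ t ∈ I, α * w t = e t * sinp (φ t) ∧ w' t = e t * cosp (φ t))
    (hφd : ∀ t ∈ I, HasDerivAt φ (φ' t) t)
    (hed : ∀ t ∈ I, HasDerivAt e (e' t) t) :
    ∀ t ∈ I,
      φ' t = α - T t / (p-1) * spow (cosp (φ t)) (p-1) * sinp (φ t) ∧
      e' t / e t = T t / (p-1) * |cosp (φ t)| ^ p := by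
  have hp1 : (0:ℝ) < p - 1 := by linarith
  have hp0 : (0:ℝ) < p := by linarith
  have hα0 : 0 < α := by
    rw [hα]; exact Real.rpow_pos_of_pos (div_pos hl hp1) _
  have hαp : α ^ p = lam / (p - 1) := by
    rw [hα, ← Real.rpow_mul (div_pos hl hp1).le, one_div,
      inv_mul_cancel₀ hp0.ne', Real.rpow_one]
  -- positivity of e
  have hepos : ∀ t ∈ I, 0 < e t := by
    intro t ht
    rw [he t ht]
    apply Real.rpow_pos_of_pos
    rcases hnz t ht with h | h
    · exact add_pos_of_nonneg_of_pos (Real.rpow_nonneg (abs_nonneg _) _)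
        (mul_pos (Real.rpow_pos_of_pos hα0 p) (Real.rpow_pos_of_pos (abs_pos.2 h) p))
    · exact add_pos_of_pos_of_nonneg (Real.rpow_pos_of_pos (abs_pos.2 h) p)
        (mul_nonneg (Real.rpow_pos_of_pos hα0 p).le (Real.rpow_nonneg (abs_nonneg _) _))
  -- e ^ p identity
  have hep : ∀ t ∈ I, e t ^ p = |w' t| ^ p + α ^ p * |w t| ^ p := by
    intro t ht
    have hX : (0:ℝ) ≤ |w' t| ^ p + α ^ p * |w t| ^ p :=
      add_nonneg (Real.rpow_nonneg (abs_nonneg _) _)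
        (mul_nonneg (Real.rpow_pos_of_pos hα0 p).le (Real.rpow_nonneg (abs_nonneg _) _))
    rw [he t ht, ← Real.rpow_mul hX, one_div, inv_mul_cancel₀ hp0.ne', Real.rpow_one]
  -- |w'|^p in polar form
  have hwc : ∀ t ∈ I, |w' t| ^ p = e t ^ p * |cosp (φ t)| ^ p := by
    intro t ht
    rw [(hpolar t ht).2, abs_mul, Real.mul_rpow (abs_nonneg _) (abs_nonneg _),
      abs_of_pos (hepos t ht)]
  have hws : ∀ t ∈ I, α ^ p * |w t| ^ p = e t ^ p * |sinp (φ t)| ^ p := by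
    intro t ht
    have h1 : α * |w t| = e t * |sinp (φ t)| := by
      rw [← abs_of_pos hα0, ← abs_mul, (hpolar t ht).1, abs_mul,
        abs_of_pos (hepos t ht)]
    calc α ^ p * |w t| ^ p = (α * |w t|) ^ p :=
          (Real.mul_rpow hα0.le (abs_nonneg _)).symm
      _ = (e t * |sinp (φ t)|) ^ p := by rw [h1]
      _ = e t ^ p * |sinp (φ t)| ^ p :=
          Real.mul_rpow (hepos t ht).le (abs_nonneg _)
  -- Pythagorean identity
  have hpy : ∀ t ∈ I, |cosp (φ t)| ^ p + |sinp (φ t)| ^ p = 1 := by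
    intro t ht
    have hE := hep t ht
    rw [hwc t ht, hws t ht] at hE
    have hEp : (0:ℝ) < e t ^ p := Real.rpow_pos_of_pos (hepos t ht) p
    have h2 : e t ^ p * (|cosp (φ t)| ^ p + |sinp (φ t)| ^ p) = e t ^ p * 1 := by
      rw [mul_one]; linarith
    exact mul_left_cancel₀ hEp.ne' h2
  -- derivative identity for e
  have hF3 : ∀ t ∈ I, e t ^ (p-1) * e' t = T t / (p-1) * |w' t| ^ p := by
    intro t ht
    have hq' : 1 < p / (p-1) := (one_lt_div hp1).2 (by linarith)
    have hcomp : HasDerivAt (fun s => |spow (w' s) (p-1)| ^ (p/(p-1)))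
        (p/(p-1) * spow (spow (w' t) (p-1)) (p/(p-1) - 1) * v t) t := by
      exact (HasDerivAt.comp t (hasDerivAt_abs_rpow' hq' (spow (w' t) (p-1))) (hv t ht)).congr_deriv
        (by rfl)
    have hfun : ∀ s : ℝ, |spow (w' s) (p-1)| ^ (p/(p-1)) = |w' s| ^ p := by
      intro s
      rw [abs_spow hp1, ← Real.rpow_mul (abs_nonneg _)]
      congr 1
      field_simp
    have hder : spow (spow (w' t) (p-1)) (p/(p-1) - 1) = w' t := by
      rw [spow_spow hp1]
      have h1 : (p-1) * (p/(p-1) - 1) = 1 := by field_simp; ring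
      rw [h1, spow_one]
    rw [hder] at hcomp
    have hw'p : HasDerivAt (fun s => |w' s| ^ p) (p/(p-1) * w' t * v t) t := by
      refine hcomp.congr_of_eventuallyEq ?_
      exact Filter.Eventually.of_forall fun s => (hfun s).symm
    have hwp : HasDerivAt (fun s => |w s| ^ p) (p * spow (w t) (p-1) * w' t) t :=
      (HasDerivAt.comp t (hasDerivAt_abs_rpow' hp (w t)) (hw t ht)).congr_deriv (by ring)
    have hRHS : HasDerivAt (fun s => |w' s| ^ p + α^p * |w s| ^ p)
        (p/(p-1) * w' t * v t + α^p * (p * spow (w t) (p-1) * w' t)) t :=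
      hw'p.add (hwp.const_mul _)
    have hLHS : HasDerivAt (fun s => e s ^ p) (e' t * p * e t ^ (p-1)) t :=
      (hed t ht).rpow_const (Or.inl (hepos t ht).ne')
    have heq : HasDerivAt (fun s => e s ^ p)
        (p/(p-1) * w' t * v t + α^p * (p * spow (w t) (p-1) * w' t)) t := by
      refine hRHS.congr_of_eventuallyEq ?_
      filter_upwards [hIopen.mem_nhds ht] with s hs
      exact hep s hs
    have hEq := heq.unique hLHS
    have hOt := hode t ht
    have hW : w' t * spow (w' t) (p-1) = |w' t| ^ p := by
      have h1 := mul_spow_self hp1 (w' t)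
      rwa [show p - 1 + 1 = p by ring] at h1
    have hvt : v t = T t * spow (w' t) (p-1) - lam * spow (w t) (p-1) := by linarith
    have hlam : lam = (p-1) * α ^ p := by rw [hαp]; field_simp
    rw [hvt, hlam] at hEq
    rw [← hW]
    field_simp at hEq ⊢
    nlinarith [hEq]
  -- e' in polar form
  have hE' : ∀ t ∈ I, e' t = T t / (p-1) * e t * |cosp (φ t)| ^ p := by
    intro t ht
    have h1 := hF3 t ht
    rw [hwc t ht] at h1
    have h2 : e t ^ p = e t ^ (p-1) * e t := by
      rw [← Real.rpow_add_one (hepos t ht).ne' (p-1), show p - 1 + 1 = p by ring]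
    rw [h2] at h1
    have h3 : (0:ℝ) < e t ^ (p-1) := Real.rpow_pos_of_pos (hepos t ht) _
    have h4 : e t ^ (p-1) * e' t = e t ^ (p-1) * (T t / (p-1) * e t * |cosp (φ t)| ^ p) := by
      rw [h1]; ring
    exact mul_left_cancel₀ h3.ne' h4
  -- the angular differentiated equation
  have hA : ∀ t ∈ I, α * (e t * cosp (φ t)) =
      e' t * sinp (φ t) + e t * (cosp (φ t) * φ' t) := by
    intro t ht
    have hR : HasDerivAt (fun s => e s * sinp (φ s))
        (e' t * sinp (φ t) + e t * (cosp (φ t) * φ' t)) t :=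
      (hed t ht).mul (HasDerivAt.comp t (htrig.2.2.2 (φ t)) (hφd t ht))
    have hL : HasDerivAt (fun s => α * w s) (α * w' t) t := (hw t ht).const_mul α
    have heq : HasDerivAt (fun s => α * w s)
        (e' t * sinp (φ t) + e t * (cosp (φ t) * φ' t)) t := by
      refine hR.congr_of_eventuallyEq ?_
      filter_upwards [hIopen.mem_nhds ht] with s hs
      exact (hpolar s hs).1
    have h5 := heq.unique hL
    rw [h5, (hpolar t ht).2]
  -- |c|^p = c * spow c (p-1)
  have hcs : ∀ c : ℝ, |c| ^ p = c * spow c (p-1) := by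
    intro c
    have h1 := mul_spow_self hp1 c
    rw [show p - 1 + 1 = p by ring] at h1
    exact h1.symm
  -- main angular formula whenever cosp (φ t) ≠ 0
  have hMain : ∀ t ∈ I, cosp (φ t) ≠ 0 →
      φ' t = α - T t / (p-1) * spow (cosp (φ t)) (p-1) * sinp (φ t) := by
    intro t ht hc
    have h1 := hA t ht
    rw [hE' t ht, hcs (cosp (φ t))] at h1
    have he0 : e t ≠ 0 := (hepos t ht).ne'
    have hec : e t * cosp (φ t) ≠ 0 := mul_ne_zero he0 hc
    apply mul_left_cancel₀ hec
    linear_combination -h1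
  intro t0 ht0
  refine ⟨?_, ?_⟩
  · by_cases hc : cosp (φ t0) ≠ 0
    · exact hMain t0 ht0 hc
    · push_neg at hc
      -- w' t0 = 0, isolated zero argument
      have hw'0 : w' t0 = 0 := by rw [(hpolar t0 ht0).2, hc, mul_zero]
      have hwne : w t0 ≠ 0 := by
        rcases hnz t0 ht0 with h | h
        · exact h
        · exact absurd hw'0 h
      have hu0 : spow (w' t0) (p-1) = 0 := by rw [hw'0, spow_zero]
      have hv0 : v t0 ≠ 0 := by
        have h1 := hode t0 ht0
        rw [hu0, mul_zero] at h1
        have : v t0 = -(lam * spow (w t0) (p-1)) := by linarith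
        rw [this, neg_ne_zero]
        exact mul_ne_zero hl.ne' (spow_ne_zero _ hwne)
      -- continuity setup: G is the target formula expressed continuously
      set G : ℝ → ℝ := fun t => α - T t / (p-1) *
        spow (w' t / e t) (p-1) * (α * w t / e t) with hGdef
      have hGF : ∀ t ∈ I, G t = α - T t / (p-1) * spow (cosp (φ t)) (p-1) * sinp (φ t) := by
        intro t ht
        have he0 : e t ≠ 0 := (hepos t ht).ne'
        have h1 : w' t / e t = cosp (φ t) := by
          rw [(hpolar t ht).2]; field_simp
        have h2 : α * w t / e t = sinp (φ t) := by
          rw [(hpolar t ht).1]; field_simp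
        rw [hGdef]; dsimp only; rw [h1, h2]
      -- continuity of w' at t0
      have hucont : ContinuousAt (fun s => spow (w' s) (p-1)) t0 :=
        (hv t0 ht0).continuousAt
      have hw'cont : ContinuousAt w' t0 := by
        have h1 : ContinuousAt (fun s => spow (spow (w' s) (p-1)) (1/(p-1))) t0 :=
          ((continuous_spow (by positivity)).continuousAt).comp hucont
        refine h1.congr ?_
        refine Filter.Eventually.of_forall fun s => ?_
        dsimp only
        rw [spow_spow hp1, mul_one_div, div_self hp1.ne', spow_one]
      have hwcont : ContinuousAt w t0 := (hw t0 ht0).continuousAt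
      have hecont : ContinuousAt e t0 := (hed t0 ht0).continuousAt
      have hTcont : ContinuousAt T t0 :=
        (hT.continuousOn.continuousAt (hIopen.mem_nhds ht0))
      have he0 : e t0 ≠ 0 := (hepos t0 ht0).ne'
      have hGcont : ContinuousAt G t0 := by
        rw [hGdef]
        apply ContinuousAt.sub continuousAt_const
        apply ContinuousAt.mul
        apply ContinuousAt.mul
        · exact hTcont.div continuousAt_const (by norm_num [hp1.ne'])
        · exact ((continuous_spow hp1).continuousAt).comp (hw'cont.div hecont he0)
        · exact (continuousAt_const.mul hwcont).div hecont he0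
      have hG0 : G t0 = α := by
        rw [hGdef]; dsimp only
        rw [hw'0, zero_div, spow_zero]; ring
      -- eventually w' ≠ 0 on punctured neighborhood
      have hslope : Tendsto (slope (fun s => spow (w' s) (p-1)) t0) (𝓝[≠] t0) (𝓝 (v t0)) :=
        hasDerivAt_iff_tendsto_slope.1 (hv t0 ht0)
      have hev : ∀ᶠ x in 𝓝[≠] t0, w' x ≠ 0 := by
        filter_upwards [hslope.eventually_ne hv0, self_mem_nhdsWithin] with x hx hx'
        intro hwx
        apply hx
        rw [slope_def_field, hu0, hwx, spow_zero, sub_zero, zero_div]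
      -- extract δ-neighborhoods
      obtain ⟨U, hUopen, hUt0, hUsub⟩ := mem_nhdsWithin.1 hev
      obtain ⟨δ3, hδ3, hball3⟩ := Metric.isOpen_iff.1 hUopen t0 hUt0
      obtain ⟨δ2, hδ2, hball2⟩ := Metric.isOpen_iff.1 hIopen t0 ht0
      have hGtend : Tendsto G (𝓝 t0) (𝓝 α) := by rw [← hG0]; exact hGcont.tendsto
      -- final: slope of φ tends to α
      have hslopeφ : Tendsto (slope φ t0) (𝓝[≠] t0) (𝓝 α) := by
        rw [Metric.tendsto_nhdsWithin_nhds]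
        intro ε hε
        obtain ⟨δ1, hδ1, hd1⟩ := Metric.tendsto_nhds_nhds.1 hGtend ε hε
        refine ⟨min (min δ1 δ2) δ3, by positivity, fun x hxne hxd => ?_⟩
        have hxd1 : dist x t0 < δ1 := lt_of_lt_of_le hxd (le_trans (min_le_left _ _) (min_le_left _ _))
        have hxd2 : dist x t0 < δ2 := lt_of_lt_of_le hxd (le_trans (min_le_left _ _) (min_le_right _ _))
        have hxd3 : dist x t0 < δ3 := lt_of_lt_of_le hxd (min_le_right _ _)
        have hxne' : x ≠ t0 := hxne
        -- MVT between t0 and x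
        have key : ∃ ξ, ξ ≠ t0 ∧ dist ξ t0 < min (min δ1 δ2) δ3 ∧ ξ ∈ I ∧
            φ' ξ = slope φ t0 x := by
          rcases lt_or_gt_of_ne hxne' with hlt | hgt
          · -- x < t0
            have hxd2' : t0 - x < δ2 := by
              rw [Real.dist_eq, abs_of_nonpos (by linarith)] at hxd2; linarith
            have hI' : Set.Icc x t0 ⊆ I := by
              intro y hy
              apply hball2
              rw [Metric.mem_ball, Real.dist_eq, abs_of_nonpos (by linarith [hy.2])]
              linarith [hy.1]
            obtain ⟨ξ, hξmem, hξeq⟩ := exists_hasDerivAt_eq_slope φ φ' hlt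
              (fun y hy => (hφd y (hI' hy)).continuousAt.continuousWithinAt)
              (fun y hy => hφd y (hI' (Ioo_subset_Icc_self hy)))
            refine ⟨ξ, ne_of_lt hξmem.2, ?_, hI' (Ioo_subset_Icc_self hξmem), ?_⟩
            · rw [Real.dist_eq, abs_of_nonpos (by linarith [hξmem.2])]
              rw [Real.dist_eq, abs_of_nonpos (by linarith)] at hxd
              linarith [hξmem.1]
            · rw [hξeq, slope_comm, slope_def_field]
          · -- t0 < x
            have hI' : Set.Icc t0 x ⊆ I := by
              intro y hy
              apply hball2
              rw [Metric.mem_ball, Real.dist_eq, abs_of_nonneg (by linarith [hy.1])]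
              rw [Real.dist_eq, abs_of_nonneg (by linarith)] at hxd2
              linarith [hy.2]
            obtain ⟨ξ, hξmem, hξeq⟩ := exists_hasDerivAt_eq_slope φ φ' hgt
              (fun y hy => (hφd y (hI' hy)).continuousAt.continuousWithinAt)
              (fun y hy => hφd y (hI' (Ioo_subset_Icc_self hy)))
            refine ⟨ξ, ne_of_gt hξmem.1, ?_, hI' (Ioo_subset_Icc_self hξmem), ?_⟩
            · rw [Real.dist_eq, abs_of_nonneg (by linarith [hξmem.1])]
              rw [Real.dist_eq, abs_of_nonneg (by linarith)] at hxd
              linarith [hξmem.2]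
            · rw [hξeq, slope_def_field]
        obtain ⟨ξ, hξne, hξd, hξI, hξeq⟩ := key
        have hξd3 : dist ξ t0 < δ3 := lt_of_lt_of_le hξd (min_le_right _ _)
        have hξd1 : dist ξ t0 < δ1 := lt_of_lt_of_le hξd (le_trans (min_le_left _ _) (min_le_left _ _))
        have hw'ξ : w' ξ ≠ 0 := hUsub ⟨hball3 hξd3, hξne⟩
        have hcξ : cosp (φ ξ) ≠ 0 := by
          intro h
          apply hw'ξ
          rw [(hpolar ξ hξI).2, h, mul_zero]
        have := hMain ξ hξI hcξ
        rw [← hξeq, this, ← hGF ξ hξI]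
        exact hd1 hξd1
      have hslopeφ' : Tendsto (slope φ t0) (𝓝[≠] t0) (𝓝 (φ' t0)) :=
        hasDerivAt_iff_tendsto_slope.1 (hφd t0 ht0)
      have : φ' t0 = α := tendsto_nhds_unique hslopeφ' hslopeφ
      rw [this, hc, spow_zero]; ring
  · rw [hE' t0 ht0]
    field_simp [(hepos t0 ht0).ne']
end

section
/- Let ℓ = max over ψ ∈ (-π_p/2, 0) of -cos_p^{(p-1)}(ψ)·sin_p(ψ), and set ᾱ = (n-1)ℓ√(-k)/(p-1). If α > ᾱ, then the equation α + ((n-1)√(-k)/(p-1))·cos_p^{(p-1)}(ψ)·sin_p(ψ) = 0 has no solution ψ ∈ [-π_p/2, π_p/2]; if 0 < α < ᾱ, it has exactly two solutions ψ₁ < ψ₂ in (-π_p/2, 0); if α = ᾱ, exactly one. -/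
open Real Set Filter MeasureTheory

namespace Stmt7Aux

noncomputable def gp (p s : ℝ) : ℝ := (1 - |s| ^ p) ^ (-1/p)

noncomputable def Fp (p x : ℝ) : ℝ := ∫ s in (0:ℝ)..x, gp p s

variable {p : ℝ}

lemma q_neg (hp : 1 < p) : -1/p < 0 := by
  rw [neg_div]
  exact neg_neg_iff_pos.mpr (by positivity)

lemma q_gt (hp : 1 < p) : (-1:ℝ) < -1/p := by
  rw [neg_div, neg_lt_neg_iff, div_lt_one (by linarith)]
  linarith

lemma gp_meas : Measurable (gp p) := by
  unfold gp; measurability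

lemma one_sub_abs_rpow_pos (hp : 1 < p) {s : ℝ} (hs : |s| < 1) : 0 < 1 - |s| ^ p := by
  have := Real.rpow_lt_one (abs_nonneg s) hs (by linarith : (0:ℝ) < p)
  linarith

lemma gp_pos (hp : 1 < p) {s : ℝ} (hs : |s| < 1) : 0 < gp p s :=
  Real.rpow_pos_of_pos (one_sub_abs_rpow_pos hp hs) _

lemma one_sub_abs_rpow_neg (hp : 1 < p) {s : ℝ} (hs : 1 < |s|) : 1 - |s| ^ p < 0 := by
  have h := Real.one_lt_rpow_iff_of_pos (show (0:ℝ) < |s| by linarith) (y := p)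
  have : 1 < |s| ^ p := h.mpr (Or.inl ⟨hs, by linarith⟩)
  linarith

lemma gp_of_one_lt_abs (hp : 1 < p) {s : ℝ} (hs : 1 < |s|) :
    gp p s = (|s| ^ p - 1) ^ (-1/p) * Real.cos (π / p) := by
  have hneg : 1 - |s| ^ p < 0 := one_sub_abs_rpow_neg hp hs
  have hpos : 0 < |s| ^ p - 1 := by linarith
  rw [gp, Real.rpow_def_of_neg hneg, Real.rpow_def_of_pos hpos]
  have hlog : Real.log (1 - |s| ^ p) = Real.log (|s| ^ p - 1) := by
    rw [show (1 - |s| ^ p) = -(|s| ^ p - 1) by ring, Real.log_neg_eq_log]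
  rw [hlog]
  congr 1
  rw [show (-1/p) * π = -(π / p) by ring, Real.cos_neg]

lemma abs_one_sub_le (hp : 1 < p) (x : ℝ) (hx : 0 ≤ x) : |1 - x| ≤ |1 - x ^ p| := by
  rcases le_or_gt x 1 with h | h
  · rcases eq_or_lt_of_le hx with h0 | h0
    · simp [← h0, Real.zero_rpow (by positivity : p ≠ 0)]
    · have hxp : x ^ p ≤ x := by
        have := Real.rpow_le_rpow_of_exponent_ge h0 h (by linarith : (1:ℝ) ≤ p)
        rwa [Real.rpow_one] at this
      rw [abs_of_nonneg (by linarith), abs_of_nonneg (by linarith)]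
      linarith
  · have hxp : x ≤ x ^ p := by
      have := Real.rpow_le_rpow_of_exponent_le h.le (by linarith : (1:ℝ) ≤ p)
      rwa [Real.rpow_one] at this
    rw [abs_of_nonpos (by linarith), abs_of_nonpos (by linarith)]
    linarith

lemma abs_gp_le (hp : 1 < p) (s : ℝ) : |gp p s| ≤ abs (1 - |s|) ^ (-1/p) := by
  have h1 : |gp p s| ≤ |1 - |s| ^ p| ^ (-1/p) := Real.abs_rpow_le_abs_rpow _ _
  refine h1.trans ?_
  rcases eq_or_ne (|s|) 1 with h | h
  · simp [h, Real.zero_rpow (ne_of_lt (q_neg hp))]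
  · have hlt : 0 < abs (1 - |s|) := by
      rw [abs_pos]; intro hc; exact h (by linarith)
    exact Real.rpow_le_rpow_of_nonpos hlt (abs_one_sub_le hp _ (abs_nonneg s))
      (q_neg hp).le

lemma intervalIntegrable_bound (hp : 1 < p) (a b : ℝ) :
    IntervalIntegrable (fun s : ℝ => abs (1 - |s|) ^ (-1/p)) volume a b := by
  have habs : ∀ a b : ℝ, IntervalIntegrable (fun x : ℝ => |x| ^ (-1/p)) volume a b := by
    have base : ∀ c : ℝ, 0 ≤ c → IntervalIntegrable (fun x : ℝ => |x| ^ (-1/p)) volume 0 c := by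
      intro c hc
      have h1 : IntervalIntegrable (fun x : ℝ => x ^ (-1/p)) volume 0 c :=
        intervalIntegral.intervalIntegrable_rpow' (q_gt hp)
      apply h1.congr
      intro x hx
      rw [Set.uIoc_of_le hc] at hx
      simp [abs_of_pos hx.1]
    have all : ∀ c : ℝ, IntervalIntegrable (fun x : ℝ => |x| ^ (-1/p)) volume 0 c := by
      intro c
      rcases le_or_gt 0 c with hc | hc
      · exact base c hc
      · have h2 := (base (-c) (by linarith))
        have h3 := (IntervalIntegrable.iff_comp_neg (by simp)).mp h2
        simp only [abs_neg, neg_zero, neg_neg] at h3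
        exact h3
    exact fun a b => (all a).symm.trans (all b)
  have base2 : ∀ c : ℝ, 0 ≤ c →
      IntervalIntegrable (fun s : ℝ => abs (1 - |s|) ^ (-1/p)) volume 0 c := by
    intro c hc
    have h1 : IntervalIntegrable (fun s : ℝ => |1 - s| ^ (-1/p)) volume 0 c := by
      have := (habs (1-0) (1-c)).comp_sub_left 1
      simpa using this
    apply h1.congr
    intro x hx
    rw [Set.uIoc_of_le hc] at hx
    simp [abs_of_pos hx.1]
  have all2 : ∀ c : ℝ, IntervalIntegrable (fun s : ℝ => abs (1 - |s|) ^ (-1/p)) volume 0 c := by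
    intro c
    rcases le_or_gt 0 c with hc | hc
    · exact base2 c hc
    · have h2 := (IntervalIntegrable.iff_comp_neg (by simp)).mp (base2 (-c) (by linarith))
      simp only [abs_neg, neg_zero, neg_neg] at h2
      exact h2
  exact (all2 a).symm.trans (all2 b)

lemma gp_int (hp : 1 < p) (a b : ℝ) : IntervalIntegrable (gp p) volume a b := by
  refine (intervalIntegrable_bound hp a b).mono_fun
    (gp_meas.aestronglyMeasurable.restrict) ?_
  refine Filter.Eventually.of_forall (fun s => ?_)
  simp only [Real.norm_eq_abs]
  rw [abs_of_nonneg (Real.rpow_nonneg (abs_nonneg _) _)]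
  exact abs_gp_le hp s

lemma Fp_zero : Fp p 0 = 0 := intervalIntegral.integral_same

lemma Fp_sub (hp : 1 < p) (x y : ℝ) : Fp p y - Fp p x = ∫ s in x..y, gp p s :=
  intervalIntegral.integral_interval_sub_left (gp_int hp 0 y) (gp_int hp 0 x)

lemma gp_even (s : ℝ) : gp p (-s) = gp p s := by simp [gp]

lemma Fp_neg (x : ℝ) : Fp p (-x) = -Fp p x := by
  have h := intervalIntegral.integral_comp_neg (a := 0) (b := x) (gp p)
  simp only [gp_even, neg_zero] at h
  rw [Fp, intervalIntegral.integral_symm, ← h, Fp]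


lemma Fp_strictMonoOn (hp : 1 < p) : StrictMonoOn (Fp p) (Icc (-1:ℝ) 1) := by
  intro x hx y hy hxy
  have hpos : 0 < ∫ s in x..y, gp p s := by
    refine intervalIntegral.intervalIntegral_pos_of_pos_on (gp_int hp x y) (fun s hs => ?_) hxy
    exact gp_pos hp (abs_lt.mpr ⟨lt_of_le_of_lt hx.1 hs.1, lt_of_lt_of_le hs.2 hy.2⟩)
  have := Fp_sub hp x y
  linarith

lemma Fp_one (hp : 1 < p) : Fp p 1 = pip p / 2 := by
  have hpip : pip p = ∫ s in (-1:ℝ)..1, gp p s := rfl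
  have hadd := intervalIntegral.integral_add_adjacent_intervals
    (gp_int hp (-1) 0) (gp_int hp 0 1)
  have h1 : (∫ s in (-1:ℝ)..0, gp p s) = Fp p 0 - Fp p (-1) := (Fp_sub hp (-1) 0).symm
  have h2 : Fp p (-1) = -Fp p 1 := Fp_neg 1
  have h0 : Fp p 0 = 0 := Fp_zero
  have h3 : (∫ s in (0:ℝ)..1, gp p s) = Fp p 1 := rfl
  rw [h3, h1, h0, h2, hpip.symm] at hadd
  linarith

lemma Fp_negone (hp : 1 < p) : Fp p (-1) = -(pip p / 2) := by
  rw [show ((-1:ℝ)) = -(1:ℝ) by norm_num, Fp_neg, Fp_one hp]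

lemma gp_right_eq (hp : 1 < p) {s : ℝ} (hs : 1 < s) :
    gp p s = (s ^ p - 1) ^ (-1/p) * Real.cos (π / p) := by
  have h := gp_of_one_lt_abs hp (s := s) (by rw [abs_of_pos (by linarith)]; exact hs)
  rwa [abs_of_pos (by linarith : (0:ℝ) < s)] at h

lemma Fp_right_lt (hp : 1 < p) (hcos : Real.cos (π / p) < 0) {x y : ℝ} (h1 : 1 ≤ x) (hxy : x < y) :
    Fp p y < Fp p x := by
  have hpos : 0 < ∫ s in x..y, -gp p s := by
    refine intervalIntegral.intervalIntegral_pos_of_pos_on (gp_int hp x y).neg (fun s hs => ?_) hxy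
    have hs1 : 1 < s := lt_of_le_of_lt h1 hs.1
    have hr : 0 < (s ^ p - 1) ^ (-1/p) := by
      refine Real.rpow_pos_of_pos ?_ _
      have := one_sub_abs_rpow_neg hp (s := s) (by rw [abs_of_pos (by linarith)]; exact hs1)
      rw [abs_of_pos (by linarith : (0:ℝ) < s)] at this
      linarith
    rw [gp_right_eq hp hs1]
    have := mul_pos hr (neg_pos.mpr hcos)
    linarith [this]
  rw [intervalIntegral.integral_neg] at hpos
  have := Fp_sub hp x y
  linarith

lemma Fp_right_eq (hp : 1 < p) (hcos : Real.cos (π / p) = 0) {x y : ℝ} (h1 : 1 ≤ x) (hxy : x ≤ y) :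
    Fp p y = Fp p x := by
  have hz : (∫ s in x..y, gp p s) = 0 := by
    have : (∫ s in x..y, gp p s) = ∫ s in x..y, (0:ℝ) := by
      refine intervalIntegral.integral_congr_ae (Filter.Eventually.of_forall (fun s hs => ?_))
      rw [Set.uIoc_of_le hxy] at hs
      have hs1 : 1 < s := lt_of_le_of_lt h1 hs.1
      rw [gp_right_eq hp hs1, hcos, mul_zero]
    simpa using this
  have := Fp_sub hp x y
  linarith

lemma Fp_right_gt (hp : 1 < p) (hcos : 0 < Real.cos (π / p)) {x y : ℝ} (h1 : 1 ≤ x) (hxy : x < y) :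
    Fp p x < Fp p y := by
  have hpos : 0 < ∫ s in x..y, gp p s := by
    refine intervalIntegral.intervalIntegral_pos_of_pos_on (gp_int hp x y) (fun s hs => ?_) hxy
    have hs1 : 1 < s := lt_of_le_of_lt h1 hs.1
    have hr : 0 < (s ^ p - 1) ^ (-1/p) := by
      refine Real.rpow_pos_of_pos ?_ _
      have := one_sub_abs_rpow_neg hp (s := s) (by rw [abs_of_pos (by linarith)]; exact hs1)
      rw [abs_of_pos (by linarith : (0:ℝ) < s)] at this
      linarith
    rw [gp_right_eq hp hs1]
    exact mul_pos hr hcos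
  have := Fp_sub hp x y
  linarith

lemma Fp_left_lt (hp : 1 < p) (hcos : Real.cos (π / p) < 0) {x y : ℝ} (hy : y ≤ -1) (hxy : x < y) :
    Fp p y < Fp p x := by
  have h := Fp_right_lt hp hcos (x := -y) (y := -x) (by linarith) (by linarith)
  rw [Fp_neg, Fp_neg] at h
  linarith

lemma Fp_left_eq (hp : 1 < p) (hcos : Real.cos (π / p) = 0) {x y : ℝ} (hy : y ≤ -1) (hxy : x ≤ y) :
    Fp p y = Fp p x := by
  have h := Fp_right_eq hp hcos (x := -y) (y := -x) (by linarith) (by linarith)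
  rw [Fp_neg, Fp_neg] at h
  linarith

lemma Fp_left_gt (hp : 1 < p) (hcos : 0 < Real.cos (π / p)) {x y : ℝ} (hy : y ≤ -1) (hxy : x < y) :
    Fp p x < Fp p y := by
  have h := Fp_right_gt hp hcos (x := -y) (y := -x) (by linarith) (by linarith)
  rw [Fp_neg, Fp_neg] at h
  linarith


noncomputable def hh (p σ : ℝ) : ℝ := σ * (1 - σ ^ p) ^ ((p-1)/p)

noncomputable def sstar (p : ℝ) : ℝ := (p⁻¹) ^ (p⁻¹)

lemma sstar_pos (hp : 1 < p) : 0 < sstar p :=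
  Real.rpow_pos_of_pos (by positivity) _

lemma sstar_lt_one (hp : 1 < p) : sstar p < 1 :=
  Real.rpow_lt_one (by positivity) (by rw [inv_lt_one_iff₀]; right; linarith) (by positivity)

lemma sstar_rpow (hp : 1 < p) : (sstar p) ^ p = p⁻¹ := by
  rw [sstar, ← Real.rpow_mul (by positivity), inv_mul_cancel₀ (by positivity : p ≠ 0),
    Real.rpow_one]

lemma hh_cont (hp : 1 < p) : Continuous (hh p) := by
  rw [continuous_iff_continuousAt]; intro σ
  have h1 : ContinuousAt (fun σ : ℝ => σ ^ p) σ :=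
    Real.continuousAt_rpow_const _ _ (Or.inr (by linarith))
  have h2 : ContinuousAt (fun σ : ℝ => 1 - σ ^ p) σ := continuousAt_const.sub h1
  have h4 : ContinuousAt (fun σ : ℝ => (1 - σ ^ p) ^ ((p-1)/p)) σ :=
    h2.rpow_const (Or.inr (div_nonneg (by linarith) (by linarith)))
  exact continuousAt_id.mul h4

lemma hh_hasDeriv (hp : 1 < p) {σ : ℝ} (h0 : 0 < σ) (h1 : σ < 1) :
    HasDerivAt (hh p) ((1 - σ ^ p) ^ (-1/p) * (1 - p * σ ^ p)) σ := by
  have hppos : (0:ℝ) < p := by linarith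
  have hA : 0 < 1 - σ ^ p := by
    have : σ ^ p < 1 := Real.rpow_lt_one h0.le h1 hppos
    linarith
  have d1 : HasDerivAt (fun σ : ℝ => σ ^ p) (p * σ ^ (p-1)) σ :=
    Real.hasDerivAt_rpow_const (Or.inl h0.ne')
  have d2 : HasDerivAt (fun σ : ℝ => 1 - σ ^ p) (-(p * σ ^ (p-1))) σ := d1.const_sub 1
  have d3 := d2.rpow_const (p := (p-1)/p) (Or.inl hA.ne')
  have d4 := (hasDerivAt_id σ).mul d3
  have heq : 1 * (1 - σ ^ p) ^ ((p-1)/p) +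
      id σ * (-(p * σ ^ (p-1)) * ((p-1)/p) * (1 - σ ^ p) ^ ((p-1)/p - 1)) =
      (1 - σ ^ p) ^ (-1/p) * (1 - p * σ ^ p) := by
    have e1 : (1 - σ ^ p) ^ ((p-1)/p - 1) = (1 - σ ^ p) ^ (-1/p) := by
      congr 1; field_simp; ring
    have e2 : (1 - σ ^ p) ^ ((p-1)/p) = (1 - σ ^ p) * (1 - σ ^ p) ^ (-1/p) := by
      rw [show (p-1)/p = 1 + (-1/p) by field_simp; ring, Real.rpow_add hA, Real.rpow_one]
    have e3 : σ * σ ^ (p-1) = σ ^ p := by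
      rw [show σ * σ ^ (p-1) = σ ^ (1:ℝ) * σ ^ (p-1) by rw [Real.rpow_one],
        ← Real.rpow_add h0]
      norm_num
    have e4 : (p-1)/p * p = p - 1 := by field_simp
    rw [e1, e2]
    simp only [id]
    linear_combination (-(((p-1)/p) * p * (1 - σ ^ p) ^ (-1/p))) * e3 +
      (-(σ ^ p * (1 - σ ^ p) ^ (-1/p))) * e4
  rw [heq] at d4
  exact d4.congr_deriv rfl

lemma hh_mono (hp : 1 < p) : StrictMonoOn (hh p) (Icc 0 (sstar p)) := by
  refine strictMonoOn_of_deriv_pos (convex_Icc _ _) (hh_cont hp).continuousOn ?_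
  intro σ hσ
  rw [interior_Icc] at hσ
  have h0 : 0 < σ := hσ.1
  have h1 : σ < 1 := lt_trans hσ.2 (sstar_lt_one hp)
  rw [(hh_hasDeriv hp h0 h1).deriv]
  have hA : 0 < 1 - σ ^ p := by
    have : σ ^ p < 1 := Real.rpow_lt_one h0.le h1 (by linarith)
    linarith
  have hσp : σ ^ p < p⁻¹ := by
    rw [← sstar_rpow hp]
    exact Real.rpow_lt_rpow h0.le hσ.2 (by linarith)
  have : p * σ ^ p < 1 := by
    have := (mul_lt_mul_iff_right₀ (show (0:ℝ) < p by linarith)).mpr hσp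
    rwa [mul_inv_cancel₀ (by positivity : p ≠ 0)] at this
  exact mul_pos (Real.rpow_pos_of_pos hA _) (by linarith)

lemma hh_anti (hp : 1 < p) : StrictAntiOn (hh p) (Icc (sstar p) 1) := by
  refine strictAntiOn_of_deriv_neg (convex_Icc _ _) (hh_cont hp).continuousOn ?_
  intro σ hσ
  rw [interior_Icc] at hσ
  have h0 : 0 < σ := lt_trans (sstar_pos hp) hσ.1
  have h1 : σ < 1 := hσ.2
  rw [(hh_hasDeriv hp h0 h1).deriv]
  have hA : 0 < 1 - σ ^ p := by
    have : σ ^ p < 1 := Real.rpow_lt_one h0.le h1 (by linarith)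
    linarith
  have hσp : p⁻¹ < σ ^ p := by
    rw [← sstar_rpow hp]
    exact Real.rpow_lt_rpow (sstar_pos hp).le hσ.1 (by linarith)
  have : 1 < p * σ ^ p := by
    have := (mul_lt_mul_iff_right₀ (show (0:ℝ) < p by linarith)).mpr hσp
    rwa [mul_inv_cancel₀ (by positivity : p ≠ 0)] at this
  exact mul_neg_of_pos_of_neg (Real.rpow_pos_of_pos hA _) (by linarith)

lemma hh_zero : hh p 0 = 0 := by simp [hh]

lemma hh_one (hp : 1 < p) : hh p 1 = 0 := by
  rw [hh, Real.one_rpow]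
  rw [show (1:ℝ) - 1 = 0 by ring, Real.zero_rpow (ne_of_gt (div_pos (by linarith) (by linarith))), mul_zero]

lemma hh_max_pos (hp : 1 < p) : 0 < hh p (sstar p) := by
  rw [hh]
  have h1 : 0 < 1 - (sstar p) ^ p := by
    rw [sstar_rpow hp]
    have : p⁻¹ < 1 := by rw [inv_lt_one_iff₀]; right; linarith
    linarith
  exact mul_pos (sstar_pos hp) (Real.rpow_pos_of_pos h1 _)

lemma hh_lt_max (hp : 1 < p) {σ : ℝ} (h0 : 0 ≤ σ) (h1 : σ ≤ 1) (hne : σ ≠ sstar p) :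
    hh p σ < hh p (sstar p) := by
  rcases lt_or_gt_of_ne hne with h | h
  · exact hh_mono hp ⟨h0, (le_of_lt (lt_of_lt_of_le h (le_refl _)))⟩
      ⟨(sstar_pos hp).le, le_refl _⟩ h
  · exact hh_anti hp ⟨le_refl _, (sstar_lt_one hp).le⟩ ⟨h.le, h1⟩ h


lemma cosp_eq (hp : 1 < p) {sinp cosp : ℝ → ℝ} {a b t : ℝ}
    (hd : HasDerivAt sinp (cosp t) t)
    (hFs : ∀ u ∈ Ioo a b, Fp p (sinp u) = u) (ht : t ∈ Ioo a b)
    (hA : 1 - |sinp t| ^ p ≠ 0) (hg0 : gp p (sinp t) ≠ 0) :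
    cosp t = (gp p (sinp t))⁻¹ := by
  have hcont : ContinuousAt (gp p) (sinp t) := by
    have h1 : ContinuousAt (fun x : ℝ => |x| ^ p) (sinp t) :=
      (continuous_abs.continuousAt).rpow_const (Or.inr (by linarith))
    have h2 : ContinuousAt (fun x : ℝ => 1 - |x| ^ p) (sinp t) := continuousAt_const.sub h1
    exact h2.rpow_const (Or.inl hA)
  have hFd : HasDerivAt (Fp p) (gp p (sinp t)) (sinp t) :=
    intervalIntegral.integral_hasDerivAt_right (gp_int hp 0 (sinp t))
      ⟨Set.univ, Filter.univ_mem, (gp_meas.aestronglyMeasurable).restrict⟩ hcont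
  have hcomp := hFd.comp t hd
  have hev : (fun u : ℝ => u) =ᶠ[nhds t] (Fp p ∘ sinp) :=
    Filter.eventuallyEq_of_mem (Ioo_mem_nhds ht.1 ht.2) (fun u hu => (hFs u hu).symm)
  have hid : HasDerivAt (fun u : ℝ => u) (gp p (sinp t) * cosp t) t :=
    hcomp.congr_of_eventuallyEq hev
  have huniq : gp p (sinp t) * cosp t = 1 := hid.unique (hasDerivAt_id t)
  exact (inv_eq_of_mul_eq_one_right huniq).symm

lemma deriv_zero_of_local_even {f : ℝ → ℝ} {c d P : ℝ} (hP : 0 < P)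
    (hev : ∀ h : ℝ, |h| ≤ P → f (c + h) = f (c - h))
    (hd : HasDerivAt f d c) : d = 0 := by
  have hd' : HasDerivAt f d (c + 0) := by rwa [add_zero]
  have du : HasDerivAt (fun x : ℝ => f (c + x)) d 0 := by
    have := hd'.comp 0 ((hasDerivAt_id (0:ℝ)).const_add c)
    simpa [Function.comp_def] using this
  have du' : HasDerivAt (fun x : ℝ => f (c + x)) d (-0) := by rwa [neg_zero]
  have dv : HasDerivAt (fun x : ℝ => f (c + (-x))) (-d) 0 := by
    have := du'.comp 0 (hasDerivAt_neg (0:ℝ))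
    simpa [mul_comm, Function.comp_def] using this
  have hveq : (fun x : ℝ => f (c + x)) =ᶠ[nhds 0] (fun x : ℝ => f (c + (-x))) := by
    refine Filter.eventuallyEq_of_mem (Ioo_mem_nhds (by linarith : -P < 0) hP) ?_
    intro x hx
    have := hev x (abs_le.mpr ⟨hx.1.le, hx.2.le⟩)
    show f (c + x) = f (c + -x)
    rw [this, sub_eq_add_neg]
  have du2 : HasDerivAt (fun x : ℝ => f (c + x)) (-d) 0 := dv.congr_of_eventuallyEq hveq
  have := du2.unique du
  linarith

lemma even_ext {f : ℝ → ℝ} {c P : ℝ} (h : ∀ x, 0 ≤ x → x ≤ P → f (c + x) = f (c - x)) :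
    ∀ x, |x| ≤ P → f (c + x) = f (c - x) := by
  intro x hx
  rcases le_or_gt 0 x with h0 | h0
  · exact h x h0 ((abs_le.mp hx).2)
  · have := h (-x) (by linarith) (by rw [abs_le] at hx; linarith)
    rw [show c + -x = c - x by ring, show c - -x = c + x by ring] at this
    exact this.symm

end Stmt7Aux

open Stmt7Aux in
set_option maxHeartbeats 1600000 in
/-- with `ℓ` the maximum of `-cos_p^{(p-1)}(ψ)·sin_p(ψ)` over
`ψ ∈ (-π_p/2, 0)` and `ᾱ = (n-1)ℓ√(-k)/(p-1)`, the equation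
`α + ((n-1)√(-k)/(p-1))·cos_p^{(p-1)}(ψ)·sin_p(ψ) = 0` has no solution in
`[-π_p/2, π_p/2]` if `α > ᾱ`, exactly two solutions `ψ₁ < ψ₂` in `(-π_p/2,0)`
if `0 < α < ᾱ`, and exactly one if `α = ᾱ`. -/
theorem stmt7 (p n k α : ℝ) (hp : 1 < p) (hn : 2 ≤ n) (hk : k < 0) (hα : 0 < α)
    (sinp cosp : ℝ → ℝ) (htrig : IsPTrig p sinp cosp)
    (l alphabar : ℝ)
    (hl : IsGreatest ((fun ψ => -(spow (cosp ψ) (p-1) * sinp ψ)) ''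
            Set.Ioo (-(pip p)/2) 0) l)
    (hab : alphabar = (n-1) * l * Real.sqrt (-k) / (p-1)) :
    (alphabar < α → ∀ ψ ∈ Set.Icc (-(pip p)/2) (pip p/2),
        α + (n-1) * Real.sqrt (-k) / (p-1) * spow (cosp ψ) (p-1) * sinp ψ ≠ 0) ∧
    (α < alphabar → ∃ ψ₁ ψ₂ : ℝ, ψ₁ ∈ Set.Ioo (-(pip p)/2) 0 ∧ ψ₂ ∈ Set.Ioo (-(pip p)/2) 0 ∧
        ψ₁ < ψ₂ ∧
        {ψ : ℝ | ψ ∈ Set.Icc (-(pip p)/2) (pip p/2) ∧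
          α + (n-1) * Real.sqrt (-k) / (p-1) * spow (cosp ψ) (p-1) * sinp ψ = 0}
          = {ψ₁, ψ₂}) ∧
    (α = alphabar → ∃! ψ : ℝ, ψ ∈ Set.Icc (-(pip p)/2) (pip p/2) ∧
        α + (n-1) * Real.sqrt (-k) / (p-1) * spow (cosp ψ) (p-1) * sinp ψ = 0) := by
  obtain ⟨h1, h2, h3, h4⟩ := htrig
  set P := pip p with hPdef
  set c' := (n-1) * Real.sqrt (-k) / (p-1) with hc'def
  have hP : 0 < P := by
    obtain ⟨ψl, hψl, -⟩ := hl.1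
    have := hψl.1; have := hψl.2
    linarith
  have hppos : (0:ℝ) < p := by linarith
  have hc' : 0 < c' := by
    rw [hc'def]
    have hx1 : (0:ℝ) < n - 1 := by linarith
    have hx2 : 0 < Real.sqrt (-k) := Real.sqrt_pos.mpr (by linarith)
    have hx3 : (0:ℝ) < p - 1 := by linarith
    positivity
  have habl : alphabar = c' * l := by rw [hab, hc'def]; ring
  have hIcc : ∀ t ∈ Set.Icc (-(P)/2) (P/2), Fp p (sinp t) = t := by
    intro t ht
    exact (h1 t ht).symm
  have hscont : Continuous sinp :=
    continuous_iff_continuousAt.mpr (fun t => (h4 t).continuousAt)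
  have hne1 : ∀ t ∈ Set.Ioo (-(P)/2) (P/2), sinp t ≠ 1 ∧ sinp t ≠ -1 := by
    intro t ht
    constructor
    · intro hc
      have h := hIcc t (Set.Ioo_subset_Icc_self ht)
      rw [hc, Fp_one hp] at h
      have := ht.2; rw [← hPdef] at *; linarith
    · intro hc
      have h := hIcc t (Set.Ioo_subset_Icc_self ht)
      rw [hc, Fp_negone hp] at h
      have := ht.1; rw [← hPdef] at *; linarith
  -- MAIN BRANCH: interior values are in (-1,1)
  have hmain : ∀ t ∈ Set.Ioo (-(P)/2) (P/2), |sinp t| < 1 := by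
    by_contra hcon
    push_neg at hcon
    obtain ⟨t₀, ht₀, habs⟩ := hcon
    have hne := hne1 t₀ ht₀
    have habs' : 1 < |sinp t₀| := by
      rcases eq_or_lt_of_le habs with h | h
      · exfalso
        rcases abs_eq (by norm_num : (0:ℝ) ≤ 1) |>.mp h.symm with h' | h'
        · exact hne.1 h'
        · exact hne.2 h'
      · exact h
    have hIsub : Set.Ioo (-(P)/2) (0:ℝ) ⊆ Set.Ioo (-(P)/2) (P/2) :=
      fun x hx => ⟨hx.1, by linarith [hx.2, hP]⟩
    rcases lt_abs.mp habs' with hR | hL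
    · -- sinp t₀ > 1
      have hall : ∀ t ∈ Set.Ioo (-(P)/2) (P/2), 1 < sinp t := by
        intro t ht
        by_contra hlt
        push_neg at hlt
        have hlt' : sinp t < 1 := lt_of_le_of_ne hlt (hne1 t ht).1
        have hsub : Set.uIcc t t₀ ⊆ Set.Ioo (-(P)/2) (P/2) :=
          (Set.ordConnected_Ioo).uIcc_subset ht ht₀
        have h1mem : (1:ℝ) ∈ Set.uIcc (sinp t) (sinp t₀) := by
          rw [Set.mem_uIcc]; left; exact ⟨hlt'.le, hR.le⟩
        obtain ⟨t', ht', hst'⟩ := intermediate_value_uIcc (hscont.continuousOn) h1mem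
        exact (hne1 t' (hsub ht')).1 hst'
      rcases lt_trichotomy (Real.cos (π / p)) 0 with hC | hC | hC
      · have hanti : ∀ t u, t ∈ Set.Ioo (-(P)/2) (P/2) → u ∈ Set.Ioo (-(P)/2) (P/2) →
            t < u → sinp u < sinp t := by
          intro t u ht hu htu
          rcases lt_trichotomy (sinp t) (sinp u) with h | h | h
          · exfalso
            have hfp := Fp_right_lt hp hC (hall t ht).le h
            rw [hIcc t (Set.Ioo_subset_Icc_self ht), hIcc u (Set.Ioo_subset_Icc_self hu)] at hfp
            linarith
          · exfalso
            have : t = u := by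
              rw [← hIcc t (Set.Ioo_subset_Icc_self ht), ← hIcc u (Set.Ioo_subset_Icc_self hu), h]
            linarith
          · exact h
        have hφval : ∀ ψ ∈ Set.Ioo (-(P)/2) (0:ℝ),
            -(spow (cosp ψ) (p-1) * sinp ψ) =
              ((sinp ψ ^ p - 1) ^ (1/p) * (-Real.cos (π / p))⁻¹) ^ (p-1) * sinp ψ := by
          intro ψ hψ
          have hψI : ψ ∈ Set.Ioo (-(P)/2) (P/2) := hIsub hψ
          have hs1 : 1 < sinp ψ := hall ψ hψI
          have hsabs : |sinp ψ| = sinp ψ := abs_of_pos (by linarith)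
          have hXpos : 0 < sinp ψ ^ p - 1 := by
            have h' := one_sub_abs_rpow_neg hp (s := sinp ψ) (by rw [hsabs]; exact hs1)
            rw [hsabs] at h'; linarith
          have hgval : gp p (sinp ψ) = (sinp ψ ^ p - 1) ^ (-1/p) * Real.cos (π / p) :=
            gp_right_eq hp hs1
          have hgneg : gp p (sinp ψ) < 0 := by
            rw [hgval]
            exact mul_neg_of_pos_of_neg (Real.rpow_pos_of_pos hXpos _) hC
          have hcv : cosp ψ = (gp p (sinp ψ))⁻¹ := by
            refine cosp_eq hp (h4 ψ) (fun u hu => hIcc u (Set.Ioo_subset_Icc_self hu)) hψI ?_ hgneg.ne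
            rw [hsabs]
            intro hz
            rw [sub_eq_zero] at hz
            linarith [hz ▸ hXpos]
          have hcneg : cosp ψ < 0 := by rw [hcv]; exact inv_lt_zero.mpr hgneg
          have habsc : |cosp ψ| = (sinp ψ ^ p - 1) ^ (1/p) * (-Real.cos (π / p))⁻¹ := by
            rw [hcv, abs_inv, hgval, abs_mul,
              abs_of_pos (Real.rpow_pos_of_pos hXpos _), abs_of_neg hC, mul_inv,
              show (-1/p : ℝ) = -(1/p) by ring, Real.rpow_neg hXpos.le, inv_inv]
          rw [spow, Real.sign_of_neg hcneg, habsc]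
          ring
        obtain ⟨ψ0, hψ0, hval0⟩ := hl.1
        have hval0' : -(spow (cosp ψ0) (p-1) * sinp ψ0) = l := hval0
        set ψ1 := ((-(P)/2) + ψ0)/2 with hψ1def
        have hψ1mem : ψ1 ∈ Set.Ioo (-(P)/2) (0:ℝ) :=
          ⟨by rw [hψ1def]; linarith [hψ0.1], by rw [hψ1def]; linarith [hψ0.1, hψ0.2]⟩
        have hψ1lt : ψ1 < ψ0 := by rw [hψ1def]; linarith [hψ0.1]
        have hslt : sinp ψ0 < sinp ψ1 := hanti ψ1 ψ0 (hIsub hψ1mem) (hIsub hψ0) hψ1lt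
        have hs0gt : 1 < sinp ψ0 := hall ψ0 (hIsub hψ0)
        have hgt : -(spow (cosp ψ0) (p-1) * sinp ψ0) < -(spow (cosp ψ1) (p-1) * sinp ψ1) := by
          rw [hφval ψ1 hψ1mem, hφval ψ0 hψ0]
          have hD : 0 < (-Real.cos (π / p))⁻¹ := inv_pos.mpr (by linarith)
          have hA0 : 0 < sinp ψ0 ^ p - 1 := by
            have h' := one_sub_abs_rpow_neg hp (s := sinp ψ0)
              (by rw [abs_of_pos (by linarith : (0:ℝ) < sinp ψ0)]; exact hs0gt)
            rw [abs_of_pos (by linarith : (0:ℝ) < sinp ψ0)] at h'; linarith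
          have hA1 : sinp ψ0 ^ p < sinp ψ1 ^ p :=
            Real.rpow_lt_rpow (by linarith) hslt hppos
          have hr : (sinp ψ0 ^ p - 1) ^ (1/p) < (sinp ψ1 ^ p - 1) ^ (1/p) :=
            Real.rpow_lt_rpow (by linarith) (by linarith) (by positivity)
          have hb0 : 0 < (sinp ψ0 ^ p - 1) ^ (1/p) := Real.rpow_pos_of_pos hA0 _
          have hm : (sinp ψ0 ^ p - 1) ^ (1/p) * (-Real.cos (π / p))⁻¹ <
              (sinp ψ1 ^ p - 1) ^ (1/p) * (-Real.cos (π / p))⁻¹ :=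
            mul_lt_mul_of_pos_right hr hD
          have hbase0 : 0 < (sinp ψ0 ^ p - 1) ^ (1/p) * (-Real.cos (π / p))⁻¹ :=
            mul_pos hb0 hD
          have hpow := Real.rpow_lt_rpow hbase0.le hm (by linarith : (0:ℝ) < p - 1)
          have hpow0 : 0 < ((sinp ψ0 ^ p - 1) ^ (1/p) * (-Real.cos (π / p))⁻¹) ^ (p-1) :=
            Real.rpow_pos_of_pos hbase0 _
          nlinarith [hpow, hpow0, hslt, hs0gt]
        have hle : -(spow (cosp ψ1) (p-1) * sinp ψ1) ≤ l := hl.2 ⟨ψ1, hψ1mem, rfl⟩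
        linarith
      · have hfp := Fp_right_eq hp hC (le_refl (1:ℝ)) hR.le
        rw [hIcc t₀ (Set.Ioo_subset_Icc_self ht₀), Fp_one hp] at hfp
        have := ht₀.2; rw [← hPdef] at *; linarith
      · have hfp := Fp_right_gt hp hC (le_refl (1:ℝ)) hR
        rw [hIcc t₀ (Set.Ioo_subset_Icc_self ht₀), Fp_one hp] at hfp
        have := ht₀.2; rw [← hPdef] at *; linarith
    · -- sinp t₀ < -1
      have hL' : sinp t₀ < -1 := by linarith
      have hall : ∀ t ∈ Set.Ioo (-(P)/2) (P/2), sinp t < -1 := by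
        intro t ht
        by_contra hlt
        push_neg at hlt
        have hlt' : -1 < sinp t := lt_of_le_of_ne hlt (Ne.symm (hne1 t ht).2)
        have hsub : Set.uIcc t₀ t ⊆ Set.Ioo (-(P)/2) (P/2) :=
          (Set.ordConnected_Ioo).uIcc_subset ht₀ ht
        have h1mem : (-1:ℝ) ∈ Set.uIcc (sinp t₀) (sinp t) := by
          rw [Set.mem_uIcc]; left; exact ⟨hL'.le, hlt'.le⟩
        obtain ⟨t', ht', hst'⟩ := intermediate_value_uIcc (hscont.continuousOn) h1mem
        exact (hne1 t' (hsub ht')).2 hst'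
      rcases lt_trichotomy (Real.cos (π / p)) 0 with hC | hC | hC
      · have hanti : ∀ t u, t ∈ Set.Ioo (-(P)/2) (P/2) → u ∈ Set.Ioo (-(P)/2) (P/2) →
            t < u → sinp u < sinp t := by
          intro t u ht hu htu
          rcases lt_trichotomy (sinp t) (sinp u) with h | h | h
          · exfalso
            have hfp := Fp_left_lt hp hC (show sinp u ≤ -1 from (hall u hu).le) h
            rw [hIcc t (Set.Ioo_subset_Icc_self ht), hIcc u (Set.Ioo_subset_Icc_self hu)] at hfp
            linarith
          · exfalso
            have : t = u := by
              rw [← hIcc t (Set.Ioo_subset_Icc_self ht), ← hIcc u (Set.Ioo_subset_Icc_self hu), h]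
            linarith
          · exact h
        have hφval : ∀ ψ ∈ Set.Ioo (-(P)/2) (0:ℝ),
            -(spow (cosp ψ) (p-1) * sinp ψ) =
              (((-sinp ψ) ^ p - 1) ^ (1/p) * (-Real.cos (π / p))⁻¹) ^ (p-1) * sinp ψ := by
          intro ψ hψ
          have hψI : ψ ∈ Set.Ioo (-(P)/2) (P/2) := hIsub hψ
          have hs1 : sinp ψ < -1 := hall ψ hψI
          have hsabs : |sinp ψ| = -sinp ψ := abs_of_neg (by linarith)
          have hXpos : 0 < (-sinp ψ) ^ p - 1 := by
            have h' := one_sub_abs_rpow_neg hp (s := sinp ψ) (by rw [hsabs]; linarith)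
            rw [hsabs] at h'; linarith
          have hgval : gp p (sinp ψ) = ((-sinp ψ) ^ p - 1) ^ (-1/p) * Real.cos (π / p) := by
            have h' := gp_of_one_lt_abs hp (s := sinp ψ) (by rw [hsabs]; linarith)
            rwa [hsabs] at h'
          have hgneg : gp p (sinp ψ) < 0 := by
            rw [hgval]
            exact mul_neg_of_pos_of_neg (Real.rpow_pos_of_pos hXpos _) hC
          have hcv : cosp ψ = (gp p (sinp ψ))⁻¹ := by
            refine cosp_eq hp (h4 ψ) (fun u hu => hIcc u (Set.Ioo_subset_Icc_self hu)) hψI ?_ hgneg.ne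
            rw [hsabs]
            intro hz
            rw [sub_eq_zero] at hz
            linarith [hz ▸ hXpos]
          have hcneg : cosp ψ < 0 := by rw [hcv]; exact inv_lt_zero.mpr hgneg
          have habsc : |cosp ψ| = ((-sinp ψ) ^ p - 1) ^ (1/p) * (-Real.cos (π / p))⁻¹ := by
            rw [hcv, abs_inv, hgval, abs_mul,
              abs_of_pos (Real.rpow_pos_of_pos hXpos _), abs_of_neg hC, mul_inv,
              show (-1/p : ℝ) = -(1/p) by ring, Real.rpow_neg hXpos.le, inv_inv]
          rw [spow, Real.sign_of_neg hcneg, habsc]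
          ring
        obtain ⟨ψ0, hψ0, hval0⟩ := hl.1
        have hval0' : -(spow (cosp ψ0) (p-1) * sinp ψ0) = l := hval0
        set ψ1 := ((-(P)/2) + ψ0)/2 with hψ1def
        have hψ1mem : ψ1 ∈ Set.Ioo (-(P)/2) (0:ℝ) :=
          ⟨by rw [hψ1def]; linarith [hψ0.1], by rw [hψ1def]; linarith [hψ0.1, hψ0.2]⟩
        have hψ1lt : ψ1 < ψ0 := by rw [hψ1def]; linarith [hψ0.1]
        have hslt : sinp ψ0 < sinp ψ1 := hanti ψ1 ψ0 (hIsub hψ1mem) (hIsub hψ0) hψ1lt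
        have hs0lt : sinp ψ1 < -1 := hall ψ1 (hIsub hψ1mem)
        have hgt : -(spow (cosp ψ0) (p-1) * sinp ψ0) < -(spow (cosp ψ1) (p-1) * sinp ψ1) := by
          rw [hφval ψ1 hψ1mem, hφval ψ0 hψ0]
          have hD : 0 < (-Real.cos (π / p))⁻¹ := inv_pos.mpr (by linarith)
          have hA1 : 0 < (-sinp ψ1) ^ p - 1 := by
            have h' := one_sub_abs_rpow_neg hp (s := sinp ψ1)
              (by rw [abs_of_neg (by linarith : sinp ψ1 < 0)]; linarith)
            rw [abs_of_neg (by linarith : sinp ψ1 < 0)] at h'; linarith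
          have hAlt : (-sinp ψ1) ^ p < (-sinp ψ0) ^ p :=
            Real.rpow_lt_rpow (by linarith) (by linarith) hppos
          have hr : ((-sinp ψ1) ^ p - 1) ^ (1/p) < ((-sinp ψ0) ^ p - 1) ^ (1/p) :=
            Real.rpow_lt_rpow (by linarith) (by linarith) (by positivity)
          have hb1 : 0 < ((-sinp ψ1) ^ p - 1) ^ (1/p) := Real.rpow_pos_of_pos hA1 _
          have hm : ((-sinp ψ1) ^ p - 1) ^ (1/p) * (-Real.cos (π / p))⁻¹ <
              ((-sinp ψ0) ^ p - 1) ^ (1/p) * (-Real.cos (π / p))⁻¹ :=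
            mul_lt_mul_of_pos_right hr hD
          have hbase1 : 0 < ((-sinp ψ1) ^ p - 1) ^ (1/p) * (-Real.cos (π / p))⁻¹ :=
            mul_pos hb1 hD
          have hpow := Real.rpow_lt_rpow hbase1.le hm (by linarith : (0:ℝ) < p - 1)
          have hpow1 : 0 < (((-sinp ψ1) ^ p - 1) ^ (1/p) * (-Real.cos (π / p))⁻¹) ^ (p-1) :=
            Real.rpow_pos_of_pos hbase1 _
          nlinarith [hpow, hpow1, hslt, hs0lt]
        have hle : -(spow (cosp ψ1) (p-1) * sinp ψ1) ≤ l := hl.2 ⟨ψ1, hψ1mem, rfl⟩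
        linarith
      · have hfp := Fp_left_eq hp hC (le_refl (-1:ℝ)) hL'.le
        rw [hIcc t₀ (Set.Ioo_subset_Icc_self ht₀), Fp_negone hp] at hfp
        have := ht₀.1; rw [← hPdef] at *; linarith
      · have hfp := Fp_left_gt hp hC (le_refl (-1:ℝ)) hL'
        rw [hIcc t₀ (Set.Ioo_subset_Icc_self ht₀), Fp_negone hp] at hfp
        have := ht₀.1; rw [← hPdef] at *; linarith
  -- from now on, the main branch
  have hIsub : Set.Ioo (-(P)/2) (0:ℝ) ⊆ Set.Ioo (-(P)/2) (P/2) :=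
    fun x hx => ⟨hx.1, by linarith [hx.2, hP]⟩
  have hmem0I : (0:ℝ) ∈ Set.Ioo (-(P)/2) (P/2) := ⟨by linarith, by linarith⟩
  have hmemIcc : ∀ {t : ℝ}, t ∈ Set.Ioo (-(P)/2) (P/2) → t ∈ Set.Icc (-(P)/2) (P/2) :=
    fun ht => Set.Ioo_subset_Icc_self ht
  have hsIcc11 : ∀ {t : ℝ}, t ∈ Set.Ioo (-(P)/2) (P/2) → sinp t ∈ Set.Icc (-1:ℝ) 1 := by
    intro t ht
    have := abs_lt.mp (hmain t ht)
    exact ⟨this.1.le, this.2.le⟩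
  -- sinp 0 = 0
  have hs00 : sinp 0 = 0 := by
    have h00 : Fp p (sinp 0) = 0 := hIcc 0 (hmemIcc hmem0I)
    have := (Fp_strictMonoOn hp).injOn (hsIcc11 hmem0I)
      (⟨by norm_num, by norm_num⟩ : (0:ℝ) ∈ Set.Icc (-1:ℝ) 1)
    exact this (by rw [h00, Fp_zero])
  -- strict monotonicity of sinp on the interior
  have hmono : ∀ t u, t ∈ Set.Ioo (-(P)/2) (P/2) → u ∈ Set.Ioo (-(P)/2) (P/2) →
      t < u → sinp t < sinp u := by
    intro t u ht hu htu
    rcases lt_trichotomy (sinp t) (sinp u) with h | h | h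
    · exact h
    · exfalso
      have : t = u := by
        rw [← hIcc t (hmemIcc ht), ← hIcc u (hmemIcc hu), h]
      linarith
    · exfalso
      have hfp := Fp_strictMonoOn hp (hsIcc11 hu) (hsIcc11 ht) h
      rw [hIcc t (hmemIcc ht), hIcc u (hmemIcc hu)] at hfp
      linarith
  -- surjectivity onto (-1,0)
  have hsurj : ∀ σ : ℝ, -1 < σ → σ < 0 →
      Fp p σ ∈ Set.Ioo (-(P)/2) (0:ℝ) ∧ sinp (Fp p σ) = σ := by
    intro σ hσ1 hσ0
    have hσIcc : σ ∈ Set.Icc (-1:ℝ) 1 := ⟨hσ1.le, by linarith⟩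
    have hlt0 : Fp p σ < 0 := by
      have := Fp_strictMonoOn hp hσIcc (⟨by norm_num, by norm_num⟩ : (0:ℝ) ∈ Set.Icc (-1:ℝ) 1) hσ0
      rwa [Fp_zero] at this
    have hgtm : -(P)/2 < Fp p σ := by
      have := Fp_strictMonoOn hp (⟨le_refl _, by norm_num⟩ : (-1:ℝ) ∈ Set.Icc (-1:ℝ) 1) hσIcc hσ1
      rw [Fp_negone hp, ← hPdef] at this
      linarith
    have hmemI : Fp p σ ∈ Set.Ioo (-(P)/2) (P/2) := ⟨hgtm, by linarith⟩
    have heq2 : Fp p (sinp (Fp p σ)) = Fp p σ := hIcc _ (hmemIcc hmemI)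
    have := (Fp_strictMonoOn hp).injOn (hsIcc11 hmemI) hσIcc heq2
    exact ⟨⟨hgtm, hlt0⟩, this⟩
  -- cosp on the interior
  have hcospI : ∀ t ∈ Set.Ioo (-(P)/2) (P/2),
      cosp t = (1 - |sinp t| ^ p) ^ (1/p) ∧ 0 < cosp t := by
    intro t ht
    have hs : |sinp t| < 1 := hmain t ht
    have hA : 0 < 1 - |sinp t| ^ p := one_sub_abs_rpow_pos hp hs
    have hgpos := gp_pos hp hs
    have hc := cosp_eq hp (h4 t) (fun u hu => hIcc u (hmemIcc hu)) ht hA.ne' hgpos.ne'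
    constructor
    · rw [hc, gp, show (-1/p : ℝ) = -(1/p) by ring, Real.rpow_neg hA.le, inv_inv]
    · rw [hc]; exact inv_pos.mpr hgpos
  -- the bridge between φ and hh
  have hφ : ∀ ψ ∈ Set.Ioo (-(P)/2) (0:ℝ),
      -(spow (cosp ψ) (p-1) * sinp ψ) = hh p (-sinp ψ) ∧ -sinp ψ ∈ Set.Ioo (0:ℝ) 1 := by
    intro ψ hψ
    have hψI : ψ ∈ Set.Ioo (-(P)/2) (P/2) := hIsub hψ
    have hs1 : |sinp ψ| < 1 := hmain ψ hψI
    have hneg : sinp ψ < 0 := by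
      have := hmono ψ 0 hψI hmem0I hψ.2
      rwa [hs00] at this
    obtain ⟨hcv, hcpos⟩ := hcospI ψ hψI
    have hA : 0 < 1 - |sinp ψ| ^ p := one_sub_abs_rpow_pos hp hs1
    have hsp : spow (cosp ψ) (p-1) = (1 - |sinp ψ| ^ p) ^ ((p-1)/p) := by
      rw [spow, Real.sign_of_pos hcpos, abs_of_pos hcpos, one_mul, hcv,
        ← Real.rpow_mul hA.le]
      congr 1
      field_simp
    have habs : |sinp ψ| = -sinp ψ := abs_of_neg hneg
    constructor
    · rw [hsp, hh, habs]
      ring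
    · have hlo := (abs_lt.mp hs1).1
      exact ⟨by linarith, by linarith⟩
  -- endpoint values of cosp vanish
  have hcosR : cosp (P/2) = 0 := by
    have hev0 : ∀ x, 0 ≤ x → x ≤ P → sinp (P/2 + x) = sinp (P/2 - x) := by
      intro x h0 hx
      have h' := h2 (P/2 + x) ⟨by linarith, by linarith⟩
      rw [h']
      congr 1
      ring
    exact deriv_zero_of_local_even hP (even_ext hev0) (h4 (P/2))
  have hcosL : cosp (-(P)/2) = 0 := by
    have hev0 : ∀ x, 0 ≤ x → x ≤ P → sinp (-(P)/2 + x) = sinp (-(P)/2 - x) := by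
      intro x h0 hx
      have e1 := h3 (-(P)/2 - x)
      have e2 := h2 (3*P/2 - x) ⟨by linarith, by linarith⟩
      rw [show -(P)/2 - x + 2 * P = 3*P/2 - x by ring] at e1
      rw [show P - (3*P/2 - x) = -(P)/2 + x by ring] at e2
      rw [← e1, e2]
    exact deriv_zero_of_local_even hP (even_ext hev0) (h4 (-(P)/2))
  -- the equation characterization
  set β := α / c' with hβdef
  have hβpos : 0 < β := div_pos hα hc'
  have hiff : ∀ ψ ∈ Set.Icc (-(P)/2) (P/2),
      ((α + c' * spow (cosp ψ) (p-1) * sinp ψ = 0) ↔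
        (ψ ∈ Set.Ioo (-(P)/2) (0:ℝ) ∧ hh p (-sinp ψ) = β)) := by
    intro ψ hψ
    constructor
    · intro heq
      have hψI : ψ ∈ Set.Ioo (-(P)/2) (P/2) := by
        rcases eq_or_lt_of_le hψ.1 with h | h
        · exfalso
          rw [← h, spow, hcosL, Real.sign_zero, zero_mul, mul_zero, zero_mul, add_zero] at heq
          linarith
        · rcases eq_or_lt_of_le hψ.2 with h' | h'
          · exfalso
            rw [h', spow, hcosR, Real.sign_zero, zero_mul, mul_zero, zero_mul, add_zero] at heq
            linarith
          · exact ⟨h, h'⟩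
      obtain ⟨hcv, hcpos⟩ := hcospI ψ hψI
      have hsneg : sinp ψ < 0 := by
        by_contra hge
        push_neg at hge
        have hsp_nonneg : 0 ≤ spow (cosp ψ) (p-1) := by
          rw [spow, Real.sign_of_pos hcpos, one_mul]
          positivity
        nlinarith [mul_nonneg (mul_nonneg hc'.le hsp_nonneg) hge]
      have hψneg : ψ < 0 := by
        have hfp := Fp_strictMonoOn hp (hsIcc11 hψI)
          (⟨by norm_num, by norm_num⟩ : (0:ℝ) ∈ Set.Icc (-1:ℝ) 1) hsneg
        rwa [hIcc ψ hψ, Fp_zero] at hfp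
      have hmemI0 : ψ ∈ Set.Ioo (-(P)/2) (0:ℝ) := ⟨hψI.1, hψneg⟩
      obtain ⟨hφval, hsmem⟩ := hφ ψ hmemI0
      refine ⟨hmemI0, ?_⟩
      rw [← hφval, hβdef, eq_div_iff hc'.ne']
      linear_combination -heq
    · rintro ⟨hmemI0, hval⟩
      rw [← (hφ ψ hmemI0).1, hβdef, eq_div_iff hc'.ne'] at hval
      linear_combination -hval
  -- the value of l
  have hlm : l = hh p (sstar p) := by
    have hub : l ≤ hh p (sstar p) := by
      obtain ⟨ψ0, hψ0, hval0⟩ := hl.1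
      have hval0' : -(spow (cosp ψ0) (p-1) * sinp ψ0) = l := hval0
      obtain ⟨hφ0, hs0'⟩ := hφ ψ0 hψ0
      rw [← hval0', hφ0]
      rcases eq_or_ne (-sinp ψ0) (sstar p) with h | h
      · rw [h]
      · exact (hh_lt_max hp hs0'.1.le hs0'.2.le h).le
    have hlb : hh p (sstar p) ≤ l := by
      obtain ⟨hmem, hsv⟩ := hsurj (-(sstar p))
        (by linarith [sstar_lt_one hp]) (by linarith [sstar_pos hp])
      have hle : -(spow (cosp (Fp p (-(sstar p)))) (p-1) * sinp (Fp p (-(sstar p)))) ≤ l :=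
        hl.2 ⟨Fp p (-(sstar p)), hmem, rfl⟩
      have hv := (hφ _ hmem).1
      rw [hv, hsv, neg_neg] at hle
      exact hle
    linarith
  refine ⟨?_, ?_, ?_⟩
  -- claim 1 : no solutions
  · intro hlt ψ hψ heq
    obtain ⟨hmem0, hval⟩ := (hiff ψ hψ).mp heq
    obtain ⟨-, hsmem⟩ := hφ ψ hmem0
    have hblt : l < β := by
      rw [hβdef, lt_div_iff₀ hc']
      calc l * c' = alphabar := by rw [habl]; ring
      _ < α := hlt
    have hle : hh p (-sinp ψ) ≤ hh p (sstar p) := by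
      rcases eq_or_ne (-sinp ψ) (sstar p) with h | h
      · rw [h]
      · exact (hh_lt_max hp hsmem.1.le hsmem.2.le h).le
    rw [hval, ← hlm] at hle
    linarith
  -- claim 2 : exactly two solutions
  · intro hlt
    have hblt : β < l := by
      rw [hβdef, div_lt_iff₀ hc']
      calc α < alphabar := hlt
      _ = l * c' := by rw [habl]; ring
    rw [hlm] at hblt
    obtain ⟨σa, hσa, hva⟩ := intermediate_value_Ioo (sstar_pos hp).le
      (hh_cont hp).continuousOn
      (show β ∈ Set.Ioo (hh p 0) (hh p (sstar p)) by rw [hh_zero]; exact ⟨hβpos, hblt⟩)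
    obtain ⟨σb, hσb, hvb⟩ := intermediate_value_Ioo' (sstar_lt_one hp).le
      (hh_cont hp).continuousOn
      (show β ∈ Set.Ioo (hh p 1) (hh p (sstar p)) by rw [hh_one hp]; exact ⟨hβpos, hblt⟩)
    have hσa1 : σa < 1 := lt_trans hσa.2 (sstar_lt_one hp)
    have hσb0 : 0 < σb := lt_trans (sstar_pos hp) hσb.1
    obtain ⟨hm2, hs2⟩ := hsurj (-σa) (by linarith) (by linarith [hσa.1])
    obtain ⟨hm1, hs1v⟩ := hsurj (-σb) (by linarith [hσb.2]) (by linarith)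
    refine ⟨Fp p (-σb), Fp p (-σa), hm1, hm2, ?_, ?_⟩
    · exact Fp_strictMonoOn hp ⟨by linarith [hσb.2], by linarith⟩
        ⟨by linarith, by linarith [hσa.1]⟩ (by linarith [hσa.2, hσb.1])
    · ext ψ
      simp only [Set.mem_setOf_eq, Set.mem_insert_iff, Set.mem_singleton_iff]
      constructor
      · rintro ⟨hψIcc, heq⟩
        obtain ⟨hmem0, hval⟩ := (hiff ψ hψIcc).mp heq
        obtain ⟨-, hsmem⟩ := hφ ψ hmem0
        rcases lt_trichotomy (-sinp ψ) (sstar p) with h | h | h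
        · right
          have heqa : -sinp ψ = σa := (hh_mono hp).injOn ⟨hsmem.1.le, h.le⟩
            ⟨hσa.1.le, hσa.2.le⟩ (by rw [hval, hva])
          have hsee : sinp ψ = sinp (Fp p (-σa)) := by rw [hs2]; linarith
          rw [← hIcc ψ hψIcc, ← hIcc _ (hmemIcc (hIsub hm2)), hsee]
        · exfalso
          rw [h] at hval
          linarith
        · left
          have heqb : -sinp ψ = σb := (hh_anti hp).injOn ⟨h.le, hsmem.2.le⟩
            ⟨hσb.1.le, hσb.2.le⟩ (by rw [hval, hvb])
          have hsee : sinp ψ = sinp (Fp p (-σb)) := by rw [hs1v]; linarith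
          rw [← hIcc ψ hψIcc, ← hIcc _ (hmemIcc (hIsub hm1)), hsee]
      · rintro (h | h) <;> subst h
        · exact ⟨hmemIcc (hIsub hm1), (hiff _ (hmemIcc (hIsub hm1))).mpr
            ⟨hm1, by rw [hs1v, neg_neg, hvb]⟩⟩
        · exact ⟨hmemIcc (hIsub hm2), (hiff _ (hmemIcc (hIsub hm2))).mpr
            ⟨hm2, by rw [hs2, neg_neg, hva]⟩⟩
  -- claim 3 : exactly one solution
  · intro heqα
    have hβl : β = hh p (sstar p) := by
      rw [hβdef, div_eq_iff hc'.ne', ← hlm]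
      calc α = alphabar := heqα
      _ = l * c' := by rw [habl]; ring
    obtain ⟨hmems, hsvs⟩ := hsurj (-(sstar p))
      (by linarith [sstar_lt_one hp]) (by linarith [sstar_pos hp])
    refine ⟨Fp p (-(sstar p)), ⟨hmemIcc (hIsub hmems),
      (hiff _ (hmemIcc (hIsub hmems))).mpr ⟨hmems, by rw [hsvs, neg_neg, ← hβl]⟩⟩, ?_⟩
    intro ψ hψ
    obtain ⟨hmem0, hval⟩ := (hiff ψ hψ.1).mp hψ.2
    obtain ⟨-, hsmem⟩ := hφ ψ hmem0
    have hse : -sinp ψ = sstar p := by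
      by_contra hne
      have hlt' := hh_lt_max hp hsmem.1.le hsmem.2.le hne
      rw [hval, ← hβl] at hlt'
      linarith
    have hsee : sinp ψ = sinp (Fp p (-(sstar p))) := by rw [hsvs]; linarith
    rw [← hIcc ψ hψ.1, ← hIcc _ (hmemIcc (hIsub hmems)), hsee]
end

section
/- Suppose α > ᾱ := (n-1)ℓ√(-k)/(p-1), where -ℓ is the minimum of cos_p^{(p-1)}·sin_p on (-π_p/2,0). Then there is ε > 0 such that the solution φ of φ' = α + ((n-1)√(-k)/(p-1))·cos_p^{(p-1)}(φ)·sin_p(φ), φ(0) = -π_p/2, satisfies φ' ≥ ε everywhere; consequently φ is strictly increasing, tends to +∞, and the first time b with φ(b) = π_p/2 satisfies b ≤ π_p/ε < ∞. -/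
open Real Set Filter MeasureTheory

open Topology

namespace Stmt8Aux

noncomputable def hfun (p s : ℝ) : ℝ := (1 - |s| ^ p) ^ (-1/p)

noncomputable def Ffun (p y : ℝ) : ℝ := ∫ s in (0:ℝ)..y, hfun p s

lemma pip_eq (p : ℝ) : pip p = ∫ s in (-1:ℝ)..1, hfun p s := rfl

lemma Ffun_eq (p y : ℝ) : (∫ s in (0:ℝ)..y, (1 - |s| ^ p) ^ (-1/p)) = Ffun p y := rfl

lemma hfun_even (p s : ℝ) : hfun p (-s) = hfun p s := by simp [hfun]

lemma hfun_pos {p : ℝ} (hp : 0 < p) {s : ℝ} (hs : |s| < 1) : 0 < hfun p s := by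
  have h1 : |s| ^ p < 1 := Real.rpow_lt_one (abs_nonneg s) hs hp
  exact Real.rpow_pos_of_pos (by linarith) _

lemma one_lt_abs_rpow {p : ℝ} (hp : 0 < p) {s : ℝ} (hs : 1 < |s|) : 1 < |s| ^ p :=
  (Real.one_lt_rpow_iff_of_pos (by linarith)).mpr (Or.inl ⟨hs, hp⟩)

lemma one_lt_rpow_of_gt {p : ℝ} (hp : 0 < p) {a : ℝ} (ha : 1 < a) : 1 < a ^ p :=
  (Real.one_lt_rpow_iff_of_pos (by linarith)).mpr (Or.inl ⟨ha, hp⟩)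

lemma hfun_eq_of_gt {p : ℝ} (hp : 0 < p) {s : ℝ} (hs : 1 < |s|) :
    hfun p s = (|s| ^ p - 1) ^ (-1/p) * Real.cos (-1/p * π) := by
  have h1 : 1 < |s| ^ p := one_lt_abs_rpow hp hs
  have h2 : 1 - |s| ^ p < 0 := by linarith
  rw [hfun, Real.rpow_def_of_neg h2]
  have h3 : Real.log (1 - |s| ^ p) = Real.log (|s| ^ p - 1) := by
    rw [← Real.log_neg_eq_log]; ring_nf
  rw [h3, Real.rpow_def_of_pos (by linarith : (0:ℝ) < |s| ^ p - 1)]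

lemma hfun_one (p : ℝ) (hp : 0 < p) : hfun p 1 = 0 := by
  have : -1/p ≠ 0 := by
    rw [neg_div]; simp [ne_of_gt hp]
  simp [hfun, Real.one_rpow, Real.zero_rpow this]

lemma hfun_contAt {p : ℝ} (hp : 0 < p) {s : ℝ} (hs : 1 < |s|) : ContinuousAt (hfun p) s := by
  have hs0 : s ≠ 0 := by intro h; rw [h] at hs; simp at hs; linarith
  have h1 : ContinuousAt (fun x : ℝ => 1 - |x| ^ p) s := by
    apply ContinuousAt.sub continuousAt_const
    exact ContinuousAt.rpow_const continuous_abs.continuousAt (Or.inr hp.le)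
  have h2 : (1 : ℝ) - |s| ^ p ≠ 0 := by
    have := one_lt_abs_rpow hp hs; linarith
  exact h1.rpow_const (Or.inl h2)


lemma hfun_intervalIntegrable_right {p : ℝ} (hp : 1 < p) {M : ℝ} (hM : 1 ≤ M) :
    IntervalIntegrable (hfun p) volume 1 M := by
  have hexp : (-1 : ℝ) < -1/p := by
    rw [neg_div]
    have : 1/p < 1 := by rw [div_lt_one (by linarith)]; linarith
    linarith
  have hg : IntervalIntegrable (fun s : ℝ => (s - 1) ^ (-1/p)) volume 1 M := by
    have h0 : IntervalIntegrable (fun x : ℝ => x ^ (-1/p)) volume 0 (M - 1) :=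
      intervalIntegral.intervalIntegrable_rpow' hexp
    have := h0.comp_sub_right 1
    simpa using this
  apply hg.mono_fun
  · apply ContinuousOn.aestronglyMeasurable _ measurableSet_uIoc
    intro x hx
    rw [uIoc_of_le hM] at hx
    exact (hfun_contAt (by linarith) (by rw [abs_of_pos (by linarith [hx.1])]; exact hx.1)).continuousWithinAt
  · rw [EventuallyLE, ae_restrict_iff' measurableSet_uIoc]
    refine Eventually.of_forall fun x hx => ?_
    rw [uIoc_of_le hM] at hx
    have hx1 : 1 < x := hx.1
    have habs : |x| = x := abs_of_pos (by linarith)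
    have hxp : 1 < x ^ p := by
      have := one_lt_abs_rpow (by linarith : (0:ℝ) < p) (by rw [habs]; exact hx1)
      rwa [habs] at this
    have hxs : x - 1 ≤ x ^ p - 1 := by
      have : x ^ (1:ℝ) ≤ x ^ p := Real.rpow_le_rpow_of_exponent_le (by linarith) (by linarith)
      rw [Real.rpow_one] at this; linarith
    rw [hfun_eq_of_gt (by linarith) (by rw [habs]; exact hx1), habs]
    have h1 : ‖(x ^ p - 1) ^ (-1/p) * Real.cos (-1/p * π)‖
        ≤ (x ^ p - 1) ^ (-1/p) := by
      rw [norm_mul, Real.norm_eq_abs, Real.norm_eq_abs,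
        abs_of_nonneg (Real.rpow_nonneg (by linarith) _)]
      calc (x ^ p - 1) ^ (-1/p) * |Real.cos (-1/p * π)| ≤ (x ^ p - 1) ^ (-1/p) * 1 := by
            apply mul_le_mul_of_nonneg_left (Real.abs_cos_le_one _)
              (Real.rpow_nonneg (by linarith) _)
        _ = _ := mul_one _
    refine h1.trans ?_
    have h2 : (x ^ p - 1) ^ (-1/p) ≤ (x - 1) ^ (-1/p) :=
      Real.rpow_le_rpow_of_nonpos (by linarith) hxs (by rw [neg_div]; exact neg_nonpos.mpr (by positivity))
    rw [Real.norm_eq_abs, abs_of_nonneg (Real.rpow_nonneg (by linarith [hx.1]) _)]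
    exact h2

lemma hfun_intervalIntegrable_left {p : ℝ} (hp : 1 < p) {M : ℝ} (hM : M ≤ -1) :
    IntervalIntegrable (hfun p) volume M (-1) := by
  have h1 : IntervalIntegrable (hfun p) volume 1 (-M) :=
    hfun_intervalIntegrable_right hp (by linarith)
  have h2 := (IntervalIntegrable.iff_comp_neg (by simp)).mp h1
  have h3 : (fun x : ℝ => hfun p (-x)) = hfun p := funext fun x => hfun_even p x
  rw [h3] at h2
  simpa using h2.symm


lemma spow_zero (q : ℝ) : spow 0 q = 0 := by simp [spow, Real.sign_zero]

lemma spow_nonneg {x : ℝ} (hx : 0 ≤ x) (q : ℝ) : 0 ≤ spow x q := by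
  rcases eq_or_lt_of_le hx with h | h
  · rw [← h, spow_zero]
  · rw [spow, Real.sign_of_pos h, one_mul]
    positivity

lemma spow_of_neg {x : ℝ} (hx : x < 0) (q : ℝ) : spow x q = -(|x| ^ q) := by
  rw [spow, Real.sign_of_neg hx]; ring

lemma spow_neg (x q : ℝ) : spow (-x) q = -spow x q := by
  rw [spow, spow, Real.sign_neg, abs_neg]; ring

/-- The auxiliary strictly increasing profile. -/
noncomputable def Qfun (p c a : ℝ) : ℝ := ((a ^ p - 1) ^ (1/p) * |c|⁻¹) ^ (p-1) * a

lemma Qfun_strictMono {p c : ℝ} (hp : 1 < p) (hc : c < 0) {a b : ℝ}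
    (ha : 1 < a) (hab : a < b) : Qfun p c a < Qfun p c b := by
  have hcabs : 0 < |c|⁻¹ := by
    rw [inv_pos, abs_pos]; exact ne_of_lt hc
  have hap : 1 < a ^ p := one_lt_rpow_of_gt (by linarith) ha
  have hbp : a ^ p < b ^ p := Real.rpow_lt_rpow (by linarith) hab (by linarith)
  have h1 : (a ^ p - 1) ^ (1/p) < (b ^ p - 1) ^ (1/p) :=
    Real.rpow_lt_rpow (by linarith) (by linarith) (by positivity)
  have h1a : 0 < (a ^ p - 1) ^ (1/p) := Real.rpow_pos_of_pos (by linarith) _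
  have h2 : (a ^ p - 1) ^ (1/p) * |c|⁻¹ < (b ^ p - 1) ^ (1/p) * |c|⁻¹ :=
    mul_lt_mul_of_pos_right h1 hcabs
  have h3 : ((a ^ p - 1) ^ (1/p) * |c|⁻¹) ^ (p-1) < ((b ^ p - 1) ^ (1/p) * |c|⁻¹) ^ (p-1) :=
    Real.rpow_lt_rpow (by positivity) h2 (by linarith)
  exact mul_lt_mul'' h3 (by linarith) (by positivity) (by linarith)

/-- From the chain rule relation `hfun p a * C = 1` with `a > 1` and `cos(-π/p) < 0`,
compute `spow C (p-1) * a`. -/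
lemma spow_inv_hfun {p : ℝ} (hp : 1 < p) (hc : Real.cos (-1/p * π) < 0) {a C : ℝ}
    (ha : 1 < a) (hC : hfun p a * C = 1) :
    spow C (p-1) * a = -(Qfun p (Real.cos (-1/p * π)) a) := by
  set c := Real.cos (-1/p * π) with hcdef
  have habs : |a| = a := abs_of_pos (by linarith)
  have hfa : hfun p a = (a ^ p - 1) ^ (-1/p) * c := by
    rw [hfun_eq_of_gt (by linarith) (by rw [habs]; exact ha), habs]
  have hap : 1 < a ^ p := one_lt_rpow_of_gt (by linarith) ha
  have hA : 0 < (a ^ p - 1) ^ (-1/p) := Real.rpow_pos_of_pos (by linarith) _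
  have hfaneg : hfun p a < 0 := by rw [hfa]; exact mul_neg_of_pos_of_neg hA hc
  have hCeq : C = (hfun p a)⁻¹ := by
    rw [← one_div]; exact eq_one_div_of_mul_eq_one_left (by linarith [mul_comm (hfun p a) C] : C * hfun p a = 1)
  have hCneg : C < 0 := by rw [hCeq]; exact inv_neg''.mpr hfaneg
  have hinv : (((a ^ p - 1) ^ (-1/p)))⁻¹ = (a ^ p - 1) ^ (1/p) := by
    rw [neg_div, Real.rpow_neg (by linarith : (0:ℝ) ≤ a ^ p - 1), inv_inv]
  have hCabs : |C| = (a ^ p - 1) ^ (1/p) * |c|⁻¹ := by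
    rw [hCeq, abs_inv, hfa, abs_mul, abs_of_pos hA, mul_inv, hinv]
  rw [spow_of_neg hCneg, hCabs, Qfun]
  ring


theorem key {p : ℝ} (hp : 1 < p) {sinp cosp : ℝ → ℝ} (htrig : IsPTrig p sinp cosp)
    {l : ℝ} (hl : IsGreatest ((fun ψ => -(spow (cosp ψ) (p-1) * sinp ψ)) ''
      Set.Ioo (-(pip p)/2) 0) l) :
    0 ≤ l ∧ ∀ ψ, -l ≤ spow (cosp ψ) (p-1) * sinp ψ := by
  obtain ⟨htrig1, htrig2, htrig3, htrig4⟩ := htrig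
  obtain ⟨⟨ψ₀, hψ₀mem, hψ₀⟩, hub⟩ := hl
  simp only at hψ₀
  -- positivity of the half-period
  have hP : 0 < pip p := by
    have h1 := hψ₀mem.1; have h2 := hψ₀mem.2; linarith
  -- integrability on [-1,1]
  have Hint : IntervalIntegrable (hfun p) volume (-1) 1 := by
    by_contra h
    have : pip p = 0 := by rw [pip_eq]; exact intervalIntegral.integral_undef h
    linarith
  set J : Set ℝ := Ioo (-(pip p)/2) (pip p/2) with hJdef
  have hJopen : IsOpen J := isOpen_Ioo
  have hJsub : J ⊆ Icc (-(pip p)/2) (pip p/2) := Ioo_subset_Icc_self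
  have hKsubJ : Ioo (-(pip p)/2) 0 ⊆ J := Ioo_subset_Ioo le_rfl (by linarith)
  have h0J : (0:ℝ) ∈ J := ⟨by linarith, by linarith⟩
  -- the implicit equation
  have Fy : ∀ t ∈ Icc (-(pip p)/2) (pip p/2), Ffun p (sinp t) = t :=
    fun t ht => (htrig1 t ht).symm
  have FyJ : ∀ t ∈ J, Ffun p (sinp t) = t := fun t ht => Fy t (hJsub ht)
  -- oddness of F
  have Fodd : ∀ y : ℝ, Ffun p (-y) = -(Ffun p y) := by
    intro y
    have h1 : (∫ x in (0:ℝ)..y, hfun p (-x)) = ∫ x in (-y)..(0:ℝ), hfun p x := by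
      simpa using intervalIntegral.integral_comp_neg (a := (0:ℝ)) (b := y) (fun x => hfun p x)
    have h2 : (∫ x in (0:ℝ)..y, hfun p (-x)) = Ffun p y := by
      rw [Ffun]; congr 1; funext x; exact hfun_even p x
    rw [Ffun, intervalIntegral.integral_symm (-y) 0, ← h1, h2]
  -- F(1) = pip p / 2
  have hIntL : IntervalIntegrable (hfun p) volume (-1) 0 :=
    Hint.mono_set (by rw [uIcc_of_le (by norm_num : (-1:ℝ) ≤ 0), uIcc_of_le (by norm_num : (-1:ℝ) ≤ 1)]; exact Icc_subset_Icc le_rfl (by norm_num))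
  have hIntR : IntervalIntegrable (hfun p) volume 0 1 :=
    Hint.mono_set (by rw [uIcc_of_le (by norm_num : (0:ℝ) ≤ 1), uIcc_of_le (by norm_num : (-1:ℝ) ≤ 1)]; exact Icc_subset_Icc (by norm_num) le_rfl)
  have Fone : Ffun p 1 = pip p / 2 := by
    have hsplit : (∫ s in (-1:ℝ)..0, hfun p s) + (∫ s in (0:ℝ)..1, hfun p s)
        = ∫ s in (-1:ℝ)..1, hfun p s :=
      intervalIntegral.integral_add_adjacent_intervals hIntL hIntR
    have hL : (∫ s in (-1:ℝ)..0, hfun p s) = Ffun p 1 := by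
      have h1 : Ffun p (-1) = -∫ s in (-1:ℝ)..0, hfun p s := by
        rw [Ffun]; exact intervalIntegral.integral_symm (-1) 0
      have h2 := Fodd 1
      rw [h2] at h1
      linarith
    rw [hL, ← pip_eq] at hsplit
    have h2 : (∫ s in (0:ℝ)..1, hfun p s) = Ffun p 1 := rfl
    rw [h2] at hsplit
    linarith
  have FmIcc : ∀ a b : ℝ, a ∈ Icc (-1:ℝ) 1 → b ∈ Icc (-1:ℝ) 1 → a < b →
      Ffun p a < Ffun p b := by
    intro a b ha hb hab
    have hIab : IntervalIntegrable (hfun p) volume a b :=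
      Hint.mono_set (by
        rw [uIcc_of_le hab.le, uIcc_of_le (by norm_num : (-1:ℝ) ≤ 1)]
        exact Icc_subset_Icc ha.1 hb.2)
    have hI0a : IntervalIntegrable (hfun p) volume 0 a :=
      Hint.mono_set (by
        rw [uIcc_of_le (by norm_num : (-1:ℝ) ≤ 1)]
        exact uIcc_subset_Icc ⟨by norm_num, by norm_num⟩ ha)
    have hpos : 0 < ∫ s in a..b, hfun p s := by
      apply intervalIntegral.intervalIntegral_pos_of_pos_on hIab _ hab
      intro x hx
      exact hfun_pos (by linarith) (abs_lt.mpr ⟨lt_of_le_of_lt ha.1 hx.1, lt_of_lt_of_le hx.2 hb.2⟩)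
    have hsplit : Ffun p a + (∫ s in a..b, hfun p s) = Ffun p b :=
      intervalIntegral.integral_add_adjacent_intervals hI0a hIab
    linarith
  have FinjIcc : ∀ a b : ℝ, a ∈ Icc (-1:ℝ) 1 → b ∈ Icc (-1:ℝ) 1 →
      Ffun p a = Ffun p b → a = b := by
    intro a b ha hb hab
    rcases lt_trichotomy a b with h | h | h
    · exact absurd hab (ne_of_lt (FmIcc a b ha hb h))
    · exact h
    · exact absurd hab.symm (ne_of_lt (FmIcc b a hb ha h))
  -- values ±1 only at endpoints
  have hne1 : ∀ t ∈ J, sinp t ≠ 1 ∧ sinp t ≠ -1 := by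
    intro t ht
    constructor
    · intro h
      have := FyJ t ht
      rw [h, Fone] at this
      exact absurd this.symm (ne_of_lt ht.2)
    · intro h
      have h2 := FyJ t ht
      rw [h] at h2
      have h3 : Ffun p (-1) = -(pip p/2) := by rw [Fodd 1, Fone]
      rw [h3] at h2
      have := ht.1; rw [neg_div] at this; linarith
  have scont : Continuous sinp := continuous_iff_continuousAt.mpr fun t => (htrig4 t).continuousAt
  -- trichotomy
  have htri1 : (∀ t ∈ J, sinp t < 1) ∨ (∀ t ∈ J, 1 < sinp t) := by
    by_contra h
    push_neg at h
    obtain ⟨⟨t₁, ht₁, h1⟩, ⟨t₂, ht₂, h2⟩⟩ := h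
    have h1' : 1 < sinp t₁ := lt_of_le_of_ne h1 (Ne.symm (hne1 t₁ ht₁).1)
    have h2' : sinp t₂ < 1 := lt_of_le_of_ne h2 (hne1 t₂ ht₂).1
    have hsub : uIcc t₂ t₁ ⊆ J := (ordConnected_Ioo).uIcc_subset ht₂ ht₁
    have hmem : (1:ℝ) ∈ uIcc (sinp t₂) (sinp t₁) := by
      rw [uIcc_of_le (by linarith)]; exact ⟨h2'.le, h1'.le⟩
    obtain ⟨t₃, ht₃, h3⟩ := intermediate_value_uIcc (scont.continuousOn) hmem
    exact (hne1 t₃ (hsub ht₃)).1 h3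
  have htri2 : (∀ t ∈ J, -1 < sinp t) ∨ (∀ t ∈ J, sinp t < -1) := by
    by_contra h
    push_neg at h
    obtain ⟨⟨t₁, ht₁, h1⟩, ⟨t₂, ht₂, h2⟩⟩ := h
    have h1' : sinp t₁ < -1 := lt_of_le_of_ne h1 (hne1 t₁ ht₁).2
    have h2' : -1 < sinp t₂ := lt_of_le_of_ne h2 (Ne.symm (hne1 t₂ ht₂).2)
    have hsub : uIcc t₁ t₂ ⊆ J := (ordConnected_Ioo).uIcc_subset ht₁ ht₂
    have hmem : (-1:ℝ) ∈ uIcc (sinp t₁) (sinp t₂) := by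
      rw [uIcc_of_le (by linarith)]; exact ⟨h1'.le, h2'.le⟩
    obtain ⟨t₃, ht₃, h3⟩ := intermediate_value_uIcc (scont.continuousOn) hmem
    exact (hne1 t₃ (hsub ht₃)).2 h3
  -- measurability/integrability helpers beyond [-1,1]
  have smaf : ∀ a : ℝ, 1 < |a| → StronglyMeasurableAtFilter (hfun p) (𝓝 a) volume := by
    intro a ha
    have hopen : IsOpen {x : ℝ | 1 < |x|} := isOpen_lt continuous_const continuous_abs
    have hcont : ContinuousOn (hfun p) {x : ℝ | 1 < |x|} :=
      fun x hx => (hfun_contAt (by linarith) hx).continuousWithinAt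
    exact AEStronglyMeasurable.stronglyMeasurableAtFilter_of_mem
      (hcont.aestronglyMeasurable hopen.measurableSet) (hopen.mem_nhds ha)
  have hint0 : ∀ a : ℝ, 1 < |a| → IntervalIntegrable (hfun p) volume 0 a := by
    intro a ha
    rcases lt_abs.mp ha with h | h
    · exact hIntR.trans (hfun_intervalIntegrable_right hp h.le)
    · have ha' : a ≤ -1 := by linarith
      exact (hIntL.symm).trans ((hfun_intervalIntegrable_left hp ha').symm)
  have hint0' : ∀ a : ℝ, 1 ≤ a → IntervalIntegrable (hfun p) volume 0 a := fun a ha =>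
    hIntR.trans (hfun_intervalIntegrable_right hp ha)
  -- the chain rule relation
  have chain : ∀ t ∈ J, 1 < |sinp t| → hfun p (sinp t) * cosp t = 1 := by
    intro t ht hgt
    have hFder : HasDerivAt (Ffun p) (hfun p (sinp t)) (sinp t) :=
      intervalIntegral.integral_hasDerivAt_right (hint0 _ hgt) (smaf _ hgt)
        (hfun_contAt (by linarith) hgt)
    have hcomp : HasDerivAt (fun s => Ffun p (sinp s)) (hfun p (sinp t) * cosp t) t :=
      HasDerivAt.comp t hFder (htrig4 t)
    have hev : (fun s => Ffun p (sinp s)) =ᶠ[𝓝 t] (fun s : ℝ => s) :=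
      eventually_of_mem (hJopen.mem_nhds ht) (fun s hs => FyJ s hs)
    have hid : HasDerivAt (fun s : ℝ => s) (hfun p (sinp t) * cosp t) t :=
      hcomp.congr_of_eventuallyEq hev.symm
    exact ((hasDerivAt_id t).unique hid).symm
  -- strict antitonicity of F on [1,∞) when cos(-π/p) < 0
  have Fanti : Real.cos (-1/p * π) < 0 → ∀ u v : ℝ, 1 ≤ u → u < v → Ffun p v < Ffun p u := by
    intro hc u v hu huv
    have hIuv : IntervalIntegrable (hfun p) volume u v :=
      (hfun_intervalIntegrable_right hp (by linarith : (1:ℝ) ≤ v)).mono_set (by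
        rw [uIcc_of_le huv.le, uIcc_of_le (by linarith : (1:ℝ) ≤ v)]
        exact Icc_subset_Icc hu le_rfl)
    have hneg : 0 < ∫ s in u..v, -(hfun p s) := by
      apply intervalIntegral.intervalIntegral_pos_of_pos_on hIuv.neg _ huv
      intro x hx
      have hx1 : 1 < x := lt_of_le_of_lt hu hx.1
      have : hfun p x < 0 := by
        rw [hfun_eq_of_gt (by linarith) (by rw [abs_of_pos (by linarith)]; exact hx1)]
        exact mul_neg_of_pos_of_neg (Real.rpow_pos_of_pos (by
          have := one_lt_abs_rpow (by linarith : (0:ℝ) < p) (by rw [abs_of_pos (by linarith : (0:ℝ) < x)]; exact hx1)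
          linarith) _) hc
      show 0 < -(hfun p x)
      linarith
    rw [intervalIntegral.integral_neg] at hneg
    have hsplit : Ffun p u + (∫ s in u..v, hfun p s) = Ffun p v :=
      intervalIntegral.integral_add_adjacent_intervals (hint0' u hu) hIuv
    linarith
  -- nonnegativity of ∫_1^a when cos(-π/p) ≥ 0
  have Fge : 0 ≤ Real.cos (-1/p * π) → ∀ a : ℝ, 1 < a → pip p / 2 ≤ Ffun p a := by
    intro hc a ha
    have hint1a : IntervalIntegrable (hfun p) volume 1 a := hfun_intervalIntegrable_right hp ha.le
    have hnn : 0 ≤ ∫ s in (1:ℝ)..a, hfun p s := by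
      apply intervalIntegral.integral_nonneg ha.le
      intro u hu
      rcases eq_or_lt_of_le hu.1 with h | h
      · rw [← h, hfun_one p (by linarith)]
      · rw [hfun_eq_of_gt (by linarith) (by rw [abs_of_pos (by linarith)]; exact h)]
        exact mul_nonneg (Real.rpow_nonneg (by
          have := one_lt_abs_rpow (by linarith : (0:ℝ) < p) (by rw [abs_of_pos (by linarith : (0:ℝ) < u)]; exact h)
          linarith) _) hc
    have hsplit : Ffun p 1 + (∫ s in (1:ℝ)..a, hfun p s) = Ffun p a :=
      intervalIntegral.integral_add_adjacent_intervals hIntR hint1a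
    rw [Fone] at hsplit
    linarith
  -- rule out the branch sinp > 1 on J
  rcases htri1 with hA1 | hB
  rotate_left
  · exfalso
    rcases le_or_gt 0 (Real.cos (-1/p * π)) with hc | hc
    · have h0 : Ffun p (sinp 0) = 0 := FyJ 0 h0J
      have := Fge hc (sinp 0) (hB 0 h0J)
      rw [h0] at this
      linarith
    · have hdec : ∀ t₁ ∈ Ioo (-(pip p)/2) (0:ℝ), ∀ t₂ ∈ Ioo (-(pip p)/2) (0:ℝ), t₁ < t₂ →
          -(spow (cosp t₂) (p-1) * sinp t₂) < -(spow (cosp t₁) (p-1) * sinp t₁) := by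
        intro t₁ h₁ t₂ h₂ hlt
        have hJ₁ := hKsubJ h₁
        have hJ₂ := hKsubJ h₂
        have ha₁ : 1 < sinp t₁ := hB t₁ hJ₁
        have ha₂ : 1 < sinp t₂ := hB t₂ hJ₂
        have hanti : sinp t₂ < sinp t₁ := by
          rcases lt_trichotomy (sinp t₂) (sinp t₁) with h | h | h
          · exact h
          · exfalso
            have := FyJ t₁ hJ₁
            rw [← h, FyJ t₂ hJ₂] at this
            exact (ne_of_lt hlt) this.symm
          · exfalso
            have := Fanti hc _ _ ha₁.le h
            rw [FyJ t₁ hJ₁, FyJ t₂ hJ₂] at this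
            linarith
        have hg₁ : spow (cosp t₁) (p-1) * sinp t₁
            = -(Qfun p (Real.cos (-1/p * π)) (sinp t₁)) :=
          spow_inv_hfun hp hc ha₁ (chain t₁ hJ₁ (by rw [abs_of_pos (by linarith)]; exact ha₁))
        have hg₂ : spow (cosp t₂) (p-1) * sinp t₂
            = -(Qfun p (Real.cos (-1/p * π)) (sinp t₂)) :=
          spow_inv_hfun hp hc ha₂ (chain t₂ hJ₂ (by rw [abs_of_pos (by linarith)]; exact ha₂))
        rw [hg₁, hg₂, neg_neg, neg_neg]
        exact Qfun_strictMono hp hc ha₂ hanti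
      have hψ₁K : (-(pip p)/2 + ψ₀)/2 ∈ Ioo (-(pip p)/2) (0:ℝ) :=
        ⟨by have := hψ₀mem.1; linarith, by have := hψ₀mem.1; have := hψ₀mem.2; linarith⟩
      have hlt := hdec _ hψ₁K ψ₀ hψ₀mem (by have := hψ₀mem.1; linarith)
      have hub' := hub ⟨_, hψ₁K, rfl⟩
      simp only at hub'
      rw [hψ₀] at hlt
      linarith
  -- rule out the branch sinp < -1 on J
  rcases htri2 with hA2 | hC
  rotate_left
  · exfalso
    rcases le_or_gt 0 (Real.cos (-1/p * π)) with hc | hc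
    · have h0 : Ffun p (sinp 0) = 0 := FyJ 0 h0J
      have hz : 1 < -sinp 0 := by have := hC 0 h0J; linarith
      have h1 : Ffun p (-sinp 0) = -(Ffun p (sinp 0)) := by
        have := Fodd (-sinp 0)
        rw [neg_neg] at this
        linarith
      have := Fge hc (-sinp 0) hz
      rw [h1, h0] at this
      linarith
    · have hz : ∀ t ∈ J, Ffun p (-sinp t) = -t := by
        intro t ht
        have := Fodd (-sinp t)
        rw [neg_neg] at this
        rw [FyJ t ht] at this
        linarith
      have hchainz : ∀ t ∈ J, hfun p (-sinp t) * cosp t = 1 := by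
        intro t ht
        have h1 := chain t ht (by rw [abs_of_neg (by have := hC t ht; linarith)]; have := hC t ht; linarith)
        rwa [show sinp t = -(-sinp t) by ring, hfun_even] at h1
      have hdec : ∀ t₁ ∈ Ioo (-(pip p)/2) (0:ℝ), ∀ t₂ ∈ Ioo (-(pip p)/2) (0:ℝ), t₁ < t₂ →
          -(spow (cosp t₂) (p-1) * sinp t₂) < -(spow (cosp t₁) (p-1) * sinp t₁) := by
        intro t₁ h₁ t₂ h₂ hlt
        have hJ₁ := hKsubJ h₁
        have hJ₂ := hKsubJ h₂
        have ha₁ : 1 < -sinp t₁ := by have := hC t₁ hJ₁; linarith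
        have ha₂ : 1 < -sinp t₂ := by have := hC t₂ hJ₂; linarith
        have hmono : -sinp t₁ < -sinp t₂ := by
          rcases lt_trichotomy (-sinp t₁) (-sinp t₂) with h | h | h
          · exact h
          · exfalso
            have h2 : sinp t₁ = sinp t₂ := by linarith
            have := FyJ t₁ hJ₁
            rw [h2, FyJ t₂ hJ₂] at this
            exact (ne_of_lt hlt) this.symm
          · exfalso
            have := Fanti hc _ _ ha₂.le h
            rw [hz t₁ hJ₁, hz t₂ hJ₂] at this
            linarith
        have hg₁ : spow (cosp t₁) (p-1) * (-sinp t₁)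
            = -(Qfun p (Real.cos (-1/p * π)) (-sinp t₁)) :=
          spow_inv_hfun hp hc ha₁ (hchainz t₁ hJ₁)
        have hg₂ : spow (cosp t₂) (p-1) * (-sinp t₂)
            = -(Qfun p (Real.cos (-1/p * π)) (-sinp t₂)) :=
          spow_inv_hfun hp hc ha₂ (hchainz t₂ hJ₂)
        have e₁ : spow (cosp t₁) (p-1) * sinp t₁ = Qfun p (Real.cos (-1/p * π)) (-sinp t₁) := by
          have : spow (cosp t₁) (p-1) * sinp t₁ = -(spow (cosp t₁) (p-1) * (-sinp t₁)) := by ring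
          rw [this, hg₁, neg_neg]
        have e₂ : spow (cosp t₂) (p-1) * sinp t₂ = Qfun p (Real.cos (-1/p * π)) (-sinp t₂) := by
          have : spow (cosp t₂) (p-1) * sinp t₂ = -(spow (cosp t₂) (p-1) * (-sinp t₂)) := by ring
          rw [this, hg₂, neg_neg]
        rw [e₁, e₂]
        have := Qfun_strictMono hp hc ha₁ hmono
        linarith
      have hψ₁K : (-(pip p)/2 + ψ₀)/2 ∈ Ioo (-(pip p)/2) (0:ℝ) :=
        ⟨by have := hψ₀mem.1; linarith, by have := hψ₀mem.1; have := hψ₀mem.2; linarith⟩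
      have hlt := hdec _ hψ₁K ψ₀ hψ₀mem (by have := hψ₀mem.1; linarith)
      have hub' := hub ⟨_, hψ₁K, rfl⟩
      simp only at hub'
      rw [hψ₀] at hlt
      linarith
  -- MAIN CASE: sinp maps J into (-1,1)
  have ymemIcc : ∀ t ∈ J, sinp t ∈ Icc (-1:ℝ) 1 := fun t ht => ⟨(hA2 t ht).le, (hA1 t ht).le⟩
  have F0 : Ffun p 0 = 0 := intervalIntegral.integral_same
  have y0 : sinp 0 = 0 := by
    apply FinjIcc _ _ (ymemIcc 0 h0J) ⟨by norm_num, by norm_num⟩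
    rw [FyJ 0 h0J, F0]
  have ymono : ∀ t₁ ∈ J, ∀ t₂ ∈ J, t₁ < t₂ → sinp t₁ < sinp t₂ := by
    intro t₁ h₁ t₂ h₂ h
    rcases lt_trichotomy (sinp t₁) (sinp t₂) with hlt | heq | hgt
    · exact hlt
    · exfalso
      have := FyJ t₁ h₁
      rw [heq, FyJ t₂ h₂] at this
      exact (ne_of_lt h) this.symm
    · exfalso
      have := FmIcc _ _ (ymemIcc t₂ h₂) (ymemIcc t₁ h₁) hgt
      rw [FyJ t₁ h₁, FyJ t₂ h₂] at this
      linarith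
  have cnn : ∀ t ∈ J, 0 ≤ cosp t := by
    intro t ht
    have hD := htrig4 t
    rw [hasDerivAt_iff_tendsto_slope] at hD
    refine ge_of_tendsto hD ?_
    have hJmem : J ∈ 𝓝[≠] t := mem_nhdsWithin_of_mem_nhds (hJopen.mem_nhds ht)
    filter_upwards [hJmem, self_mem_nhdsWithin] with s hsJ hsne
    have hsne' : s ≠ t := hsne
    rw [slope_def_field]
    rcases lt_or_gt_of_ne hsne' with h | h
    · have h1 := ymono s hsJ t ht h
      apply div_nonneg_iff.mpr
      right
      constructor <;> linarith
    · have h1 := ymono t ht s hsJ h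
      apply div_nonneg <;> linarith
  have hnegJ : ∀ u : ℝ, u ∈ J → -u ∈ J := by
    intro u hu
    have h1 := hu.1; have h2 := hu.2
    constructor <;> [skip; skip] <;> [linarith; linarith]
  have yodd : ∀ u ∈ J, sinp (-u) = -sinp u := by
    intro u hu
    have hnu : -u ∈ J := hnegJ u hu
    apply FinjIcc _ _ (ymemIcc _ hnu)
    · have := ymemIcc u hu
      exact ⟨by linarith [this.2], by linarith [this.1]⟩
    · rw [FyJ _ hnu, Fodd, FyJ u hu]
  have ceven : ∀ u ∈ J, cosp (-u) = cosp u := by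
    intro u hu
    have hnu : -u ∈ J := hnegJ u hu
    have h1 : HasDerivAt (fun s : ℝ => sinp (-s)) (cosp (-u) * (-1)) u :=
      HasDerivAt.comp u (htrig4 (-u)) ((hasDerivAt_id u).neg)
    have hev : (fun s : ℝ => -sinp s) =ᶠ[𝓝 u] (fun s : ℝ => sinp (-s)) :=
      eventually_of_mem (hJopen.mem_nhds hu) (fun s hs => (yodd s hs).symm)
    have h2 : HasDerivAt (fun s : ℝ => -sinp s) (cosp (-u) * (-1)) u :=
      h1.congr_of_eventuallyEq hev
    have h3 : HasDerivAt (fun s : ℝ => -sinp s) (-(cosp u)) u := (htrig4 u).neg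
    have := h2.unique h3
    linarith
  -- cosp vanishes at the endpoints
  have cP2 : cosp (pip p/2) = 0 := by
    have hmem : Ioo (pip p/2) (3*pip p/2) ∈ 𝓝[>] (pip p/2) :=
      Ioo_mem_nhdsGT_of_mem ⟨le_rfl, by linarith⟩
    have hd1 : HasDerivWithinAt sinp (cosp (pip p/2)) (Ioi (pip p/2)) (pip p/2) :=
      (htrig4 _).hasDerivWithinAt
    have hder2 : HasDerivAt (fun s => sinp (pip p - s)) (cosp (pip p - pip p/2) * (-1)) (pip p/2) :=
      HasDerivAt.comp _ (htrig4 _) ((hasDerivAt_id (pip p/2)).const_sub (pip p))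
    have e : pip p - pip p/2 = pip p/2 := by ring
    rw [e] at hder2
    have hd2 : HasDerivWithinAt sinp (cosp (pip p/2) * (-1)) (Ioi (pip p/2)) (pip p/2) := by
      apply (hder2.hasDerivWithinAt).congr_of_eventuallyEq
      · exact eventually_of_mem hmem (fun s hs => htrig2 s ⟨hs.1.le, hs.2.le⟩)
      · rw [e]
    have e1 := hd1.derivWithin (uniqueDiffWithinAt_Ioi _)
    have e2 := hd2.derivWithin (uniqueDiffWithinAt_Ioi _)
    rw [e1] at e2
    linarith
  have cmP2 : cosp (-(pip p)/2) = 0 := by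
    have hrefl' : ∀ s : ℝ, s ∈ Ioo (-(3*pip p)/2) (-(pip p)/2) → sinp s = sinp (-pip p - s) := by
      intro s hs
      have h1 : sinp s = sinp (s + 2*pip p) := (htrig3 s).symm
      have h2 : s + 2*pip p ∈ Icc (pip p/2) (3*pip p/2) :=
        ⟨by have := hs.1; linarith, by have := hs.2; linarith⟩
      rw [h1, htrig2 _ h2]
      congr 1
      ring
    have hd1 : HasDerivWithinAt sinp (cosp (-(pip p)/2)) (Iio (-(pip p)/2)) (-(pip p)/2) :=
      (htrig4 _).hasDerivWithinAt
    have hder2 : HasDerivAt (fun s => sinp (-pip p - s)) (cosp (-pip p - (-(pip p)/2)) * (-1)) (-(pip p)/2) :=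
      HasDerivAt.comp _ (htrig4 _) ((hasDerivAt_id (-(pip p)/2)).const_sub (-pip p))
    have e : -pip p - (-(pip p)/2) = -(pip p)/2 := by ring
    rw [e] at hder2
    have hmemL : Ioo (-(3*pip p)/2) (-(pip p)/2) ∈ 𝓝[<] (-(pip p)/2) :=
      Ioo_mem_nhdsLT_of_mem ⟨by linarith, le_rfl⟩
    have hd2 : HasDerivWithinAt sinp (cosp (-(pip p)/2) * (-1)) (Iio (-(pip p)/2)) (-(pip p)/2) := by
      apply (hder2.hasDerivWithinAt).congr_of_eventuallyEq
      · exact eventually_of_mem hmemL (fun s hs => hrefl' s hs)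
      · have h1 : sinp (-(pip p)/2) = sinp ((-(pip p)/2) + 2*pip p) := (htrig3 _).symm
        have h2 : (-(pip p)/2) + 2*pip p ∈ Icc (pip p/2) (3*pip p/2) :=
          ⟨by linarith, by linarith⟩
        rw [h1, htrig2 _ h2]
        congr 1
        ring
    have e1 := hd1.derivWithin (uniqueDiffWithinAt_Iio _)
    have e2 := hd2.derivWithin (uniqueDiffWithinAt_Iio _)
    rw [e1] at e2
    linarith
  -- l is nonnegative
  have l0 : 0 ≤ l := by
    have hJψ := hKsubJ hψ₀mem
    have hs : sinp ψ₀ ≤ 0 := by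
      have := ymono ψ₀ hJψ 0 h0J hψ₀mem.2
      rw [y0] at this; linarith
    have hsp : 0 ≤ spow (cosp ψ₀) (p-1) := spow_nonneg (cnn ψ₀ hJψ) _
    have := mul_nonpos_of_nonneg_of_nonpos hsp hs
    linarith
  -- the bound on the closed central interval
  have gIcc : ∀ u ∈ Icc (-(pip p)/2) (pip p/2), |spow (cosp u) (p-1) * sinp u| ≤ l := by
    intro u hu
    rcases eq_or_lt_of_le hu.1 with h | h1
    · rw [← h, cmP2, spow_zero, zero_mul, abs_zero]; exact l0
    rcases eq_or_lt_of_le hu.2 with h | h2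
    · rw [h, cP2, spow_zero, zero_mul, abs_zero]; exact l0
    have huJ : u ∈ J := ⟨h1, h2⟩
    rcases lt_trichotomy u 0 with h | h | h
    · have hK : u ∈ Ioo (-(pip p)/2) 0 := ⟨h1, h⟩
      have hgle : spow (cosp u) (p-1) * sinp u ≤ 0 :=
        mul_nonpos_of_nonneg_of_nonpos (spow_nonneg (cnn u huJ) _)
          (by have := ymono u huJ 0 h0J h; rw [y0] at this; linarith)
      rw [abs_of_nonpos hgle]
      have := hub ⟨u, hK, rfl⟩
      simpa using this
    · rw [h, y0, mul_zero, abs_zero]; exact l0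
    · have hnu : -u ∈ Ioo (-(pip p)/2) 0 := ⟨by linarith, by linarith⟩
      have hnuJ : -u ∈ J := hKsubJ hnu
      have heq : spow (cosp u) (p-1) * sinp u = -(spow (cosp (-u)) (p-1) * sinp (-u)) := by
        rw [yodd u huJ, ceven u huJ]; ring
      rw [heq, abs_neg]
      have hgle : spow (cosp (-u)) (p-1) * sinp (-u) ≤ 0 :=
        mul_nonpos_of_nonneg_of_nonpos (spow_nonneg (cnn _ hnuJ) _)
          (by have := ymono (-u) hnuJ 0 h0J (by linarith); rw [y0] at this; linarith)
      rw [abs_of_nonpos hgle]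
      have := hub ⟨-u, hnu, rfl⟩
      simpa using this
  refine ⟨l0, fun ψ => ?_⟩
  -- reduce to the fundamental domain via periodicity
  have cper : ∀ t : ℝ, cosp (t + 2*pip p) = cosp t := by
    intro t
    have h1 : HasDerivAt (fun s : ℝ => sinp (s + 2*pip p)) (cosp (t + 2*pip p) * 1) t :=
      HasDerivAt.comp t (htrig4 _) ((hasDerivAt_id t).add_const _)
    have h2 : (fun s : ℝ => sinp (s + 2*pip p)) = sinp := funext htrig3
    rw [h2] at h1
    have := h1.unique (htrig4 t)
    linarith
  have h2P : (0:ℝ) < 2 * pip p := by linarith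
  set m := toIcoMod h2P (-(pip p)/2) ψ with hm
  have hmIco : m ∈ Ico (-(pip p)/2) (-(pip p)/2 + 2*pip p) := toIcoMod_mem_Ico h2P _ ψ
  have hper : Function.Periodic (fun t => spow (cosp t) (p-1) * sinp t) (2*pip p) := by
    intro t
    simp only
    rw [cper t, htrig3 t]
  have hgm : spow (cosp m) (p-1) * sinp m = spow (cosp ψ) (p-1) * sinp ψ := by
    have hsub := self_sub_toIcoMod h2P (-(pip p)/2) ψ
    have hmeq : m = ψ - toIcoDiv h2P (-(pip p)/2) ψ • (2*pip p) := by
      rw [← hm] at hsub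
      linarith
    rw [hmeq]
    exact hper.sub_zsmul_eq _
  rw [← hgm]
  rcases le_or_gt m (pip p/2) with hle | hgt
  · have := gIcc m ⟨hmIco.1, hle⟩
    have habs := neg_abs_le (spow (cosp m) (p-1) * sinp m)
    linarith
  · have hm2 : m < 3 * pip p/2 := by have := hmIco.2; linarith
    have hrefl := htrig2 m ⟨hgt.le, hm2.le⟩
    have hPmJ : pip p - m ∈ Icc (-(pip p)/2) (pip p/2) := ⟨by linarith, by linarith⟩
    have hcref : cosp m = -(cosp (pip p - m)) := by
      have hder2 : HasDerivAt (fun s => sinp (pip p - s)) (cosp (pip p - m) * (-1)) m :=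
        HasDerivAt.comp _ (htrig4 _) ((hasDerivAt_id m).const_sub (pip p))
      have hev : sinp =ᶠ[𝓝 m] (fun s => sinp (pip p - s)) :=
        eventually_of_mem (Ioo_mem_nhds hgt hm2) (fun s hs => htrig2 s ⟨hs.1.le, hs.2.le⟩)
      have := (hder2.congr_of_eventuallyEq hev).unique (htrig4 m)
      linarith
    have heq : spow (cosp m) (p-1) * sinp m
        = -(spow (cosp (pip p - m)) (p-1) * sinp (pip p - m)) := by
      rw [hcref, hrefl, spow_neg]; ring
    rw [heq]
    have h1 := gIcc _ hPmJ
    have habs := le_abs_self (spow (cosp (pip p - m)) (p-1) * sinp (pip p - m))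
    linarith

end Stmt8Aux

/-- if `α > ᾱ = (n-1)ℓ√(-k)/(p-1)` (with `-ℓ` the minimum of
`cos_p^{(p-1)}·sin_p` on `(-π_p/2,0)`), then for the solution of
`φ' = α + ((n-1)√(-k)/(p-1))·cos_p^{(p-1)}(φ)·sin_p(φ)`, `φ(0) = -π_p/2`,
there is `ε > 0` with `φ' ≥ ε` everywhere; hence `φ` is strictly increasing,
tends to `+∞`, and the first time `b` with `φ(b) = π_p/2` satisfies `b ≤ π_p/ε`. -/
theorem stmt8 (p n k α : ℝ) (hp : 1 < p) (hn : 2 ≤ n) (hk : k < 0)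
    (sinp cosp : ℝ → ℝ) (htrig : IsPTrig p sinp cosp)
    (l : ℝ)
    (hl : IsGreatest ((fun ψ => -(spow (cosp ψ) (p-1) * sinp ψ)) ''
            Set.Ioo (-(pip p)/2) 0) l)
    (hαbig : (n-1) * l * Real.sqrt (-k) / (p-1) < α)
    (φ : ℝ → ℝ) (hφ0 : φ 0 = -(pip p)/2)
    (hφ : ∀ t, HasDerivAt φ
      (α + (n-1) * Real.sqrt (-k) / (p-1) * spow (cosp (φ t)) (p-1) * sinp (φ t)) t) :
    ∃ ε > 0,
      (∀ t : ℝ, ε ≤ α + (n-1) * Real.sqrt (-k) / (p-1)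
          * spow (cosp (φ t)) (p-1) * sinp (φ t)) ∧
      StrictMono φ ∧
      Filter.Tendsto φ Filter.atTop Filter.atTop ∧
      ∃ b : ℝ, φ b = pip p / 2 ∧ b ≤ pip p / ε ∧ ∀ s, φ s = pip p / 2 → b ≤ s := by
  obtain ⟨l0, hkey⟩ := Stmt8Aux.key hp htrig hl
  have hP : 0 < pip p := by
    obtain ⟨ψ₀, hψ₀mem, _⟩ := hl.1
    have h1 := hψ₀mem.1
    have h2 := hψ₀mem.2
    linarith
  set C := (n-1) * Real.sqrt (-k) / (p-1) with hC
  clear_value C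
  have hCpos : 0 < C := by
    rw [hC]
    exact div_pos (mul_pos (by linarith) (Real.sqrt_pos.mpr (by linarith))) (by linarith)
  have hεpos : 0 < α - C * l := by
    have h1 : (n-1) * l * Real.sqrt (-k) / (p-1) = C * l := by rw [hC]; ring
    linarith [hαbig, h1]
  set ε := α - C * l with hε
  clear_value ε
  have hbound : ∀ t : ℝ, ε ≤ α + C * spow (cosp (φ t)) (p-1) * sinp (φ t) := by
    intro t
    have h1 := hkey (φ t)
    have h2 := mul_le_mul_of_nonneg_left h1 hCpos.le
    have h3 : C * -l = -(C*l) := by ring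
    have h4 : α + C * spow (cosp (φ t)) (p-1) * sinp (φ t)
        = α + C * (spow (cosp (φ t)) (p-1) * sinp (φ t)) := by ring
    rw [h4]
    rw [h3] at h2
    linarith
  have hmonoφ : StrictMono φ := by
    apply strictMono_of_deriv_pos
    intro x
    rw [(hφ x).deriv]
    linarith [hbound x]
  have hψmono : Monotone (fun t => φ t - ε * t) := by
    have hdiff : Differentiable ℝ (fun t => φ t - ε * t) := fun t =>
      ((hφ t).sub ((hasDerivAt_id t).const_mul ε)).differentiableAt
    apply monotone_of_deriv_nonneg hdiff
    intro x
    have hd : HasDerivAt (fun t => φ t - ε * t)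
        ((α + C * spow (cosp (φ x)) (p-1) * sinp (φ x)) - ε * 1) x :=
      (hφ x).sub ((hasDerivAt_id x).const_mul ε)
    rw [hd.deriv]
    linarith [hbound x]
  have hlin : ∀ t : ℝ, 0 ≤ t → ε * t + φ 0 ≤ φ t := by
    intro t ht
    have h1 := hψmono ht
    simp only at h1
    linarith [h1]
  have htend : Tendsto φ atTop atTop := by
    apply tendsto_atTop_mono' atTop _
      (tendsto_atTop_add_const_right atTop (φ 0) (Tendsto.const_mul_atTop hεpos tendsto_id))
    filter_upwards [eventually_ge_atTop (0:ℝ)] with t ht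
    exact hlin t ht
  have hcont : Continuous φ := continuous_iff_continuousAt.mpr fun t => (hφ t).continuousAt
  obtain ⟨T, hT1, hT2⟩ := ((htend.eventually_ge_atTop (pip p / 2)).and
    (eventually_ge_atTop (0:ℝ))).exists
  have hφ0le : φ 0 ≤ pip p/2 := by rw [hφ0]; linarith
  obtain ⟨b, hbmem, hb⟩ := intermediate_value_Icc hT2 hcont.continuousOn ⟨hφ0le, hT1⟩
  refine ⟨ε, hεpos, hbound, hmonoφ, htend, b, hb, ?_, ?_⟩
  · have h1 := hlin b hbmem.1
    rw [hb, hφ0] at h1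
    rw [le_div_iff₀ hεpos]
    have h2 : ε * b ≤ pip p := by linarith
    calc b * ε = ε * b := mul_comm b ε
      _ ≤ pip p := h2
  · intro s hs
    have h1 : φ s = φ b := by rw [hs, hb]
    exact (hmonoφ.injective h1).symm.le
end
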